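/- arXiv:1805.01878 — 5 statements merged into one kernel-verified Lean document; each statement's English description precedes it below -/
import Mathlib

section
/- For each fixed cut-off value u_c in (0,1) and each KPP reaction function f, the propagation speed of a permanent form travelling wave solution with cut-off u_c is unique: if (v₁, U₁) and (v₂, U₂) are both permanent form travelling wave solutions with cut-off u_c and speeds v₁ ≥ 0 and v₂ ≥ 0 respectively, then v₁ = v₂. -/
open Real Filter Topology

/-- A KPP reaction function: `f ∈ C¹`, `f 0 = f 1 = 0`, `f' 0 = 1`, `f' 1 < 0`,
`0 < f u ≤ u` on `(0,1)` and `f u < 0` for `u > 1`. -/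
def IsKPP (f : ℝ → ℝ) : Prop :=
  ContDiff ℝ 1 f ∧ f 0 = 0 ∧ f 1 = 0 ∧ deriv f 0 = 1 ∧ deriv f 1 < 0 ∧
  (∀ u : ℝ, 0 < u → u < 1 → 0 < f u ∧ f u ≤ u) ∧
  (∀ u : ℝ, 1 < u → f u < 0)

/-- The cut-off reaction function: `f_c u = f u` for `u > u_c`, and `0` for `u ≤ u_c`. -/
noncomputable def cutoff (f : ℝ → ℝ) (uc : ℝ) : ℝ → ℝ :=
  fun u => if uc < u then f u else 0

/-- A permanent form travelling wave solution with cut-off `uc` and speed `v`. -/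
def IsPTW (f : ℝ → ℝ) (uc v : ℝ) (U : ℝ → ℝ) : Prop :=
  ContDiff ℝ 1 U ∧
  (∀ y : ℝ, y ≠ 0 → ContDiffAt ℝ 2 U y) ∧
  (∀ y : ℝ, y ≠ 0 → deriv (deriv U) y + v * deriv U y + cutoff f uc (U y) = 0) ∧
  U 0 = uc ∧
  (∀ y : ℝ, y < 0 → uc ≤ U y ∧ U y ≤ 1) ∧
  (∀ y : ℝ, 0 < y → 0 ≤ U y ∧ U y ≤ uc) ∧
  Tendsto U atBot (𝓝 1) ∧
  Tendsto U atTop (𝓝 0)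

open Set MeasureTheory intervalIntegral

namespace PTWAux

/-- Bundled hypotheses about a single travelling wave. -/
structure Setup (f : ℝ → ℝ) (uc v : ℝ) (U : ℝ → ℝ) : Prop where
  hf : IsKPP f
  huc : uc ∈ Set.Ioo (0:ℝ) 1
  h : IsPTW f uc v U
  hv : 0 ≤ v

variable {f : ℝ → ℝ} {uc v : ℝ} {U : ℝ → ℝ}

namespace Setup

lemma contU (S : Setup f uc v U) : Continuous U := S.h.1.continuous

lemma contU' (S : Setup f uc v U) : Continuous (deriv U) := S.h.1.continuous_deriv le_rfl

lemma hasDerivU (S : Setup f uc v U) (y : ℝ) : HasDerivAt U (deriv U y) y :=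
  (S.h.1.differentiable one_ne_zero y).hasDerivAt

lemma contf (S : Setup f uc v U) : Continuous f := S.hf.1.continuous

lemma hasDerivU' (S : Setup f uc v U) {y : ℝ} (hy : y ≠ 0) :
    HasDerivAt (deriv U) (deriv (deriv U) y) y := by
  have h2 := S.h.2.1 y hy
  have h1 : ContDiffAt ℝ 1 (fderiv ℝ U) y := h2.fderiv_right (by norm_num)
  have h1' : ContDiffAt ℝ 1 (deriv U) y := by
    have : ContDiffAt ℝ 1 (fun x => fderiv ℝ U x 1) y := h1.clm_apply contDiffAt_const
    exact this
  exact (h1'.differentiableAt one_ne_zero).hasDerivAt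

lemma ode (S : Setup f uc v U) {y : ℝ} (hy : y ≠ 0) :
    deriv (deriv U) y = -v * deriv U y - cutoff f uc (U y) := by
  have := S.h.2.2.1 y hy; linarith

lemma ode_pos (S : Setup f uc v U) {y : ℝ} (hy : 0 < y) :
    deriv (deriv U) y = -v * deriv U y := by
  have h1 : U y ≤ uc := (S.h.2.2.2.2.2.1 y hy).2
  have := S.ode (ne_of_gt hy)
  rw [this, cutoff, if_neg (by linarith)]; ring

/-- On `y ≥ 0`, `e^{vy} U'(y)` is constant. -/
lemma deriv_exp (S : Setup f uc v U) {b : ℝ} (hb : 0 ≤ b) :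
    Real.exp (v * b) * deriv U b = deriv U 0 := by
  rcases eq_or_lt_of_le hb with rfl | hb
  · simp
  have key : (0:ℝ) = Real.exp (v * b) * deriv U b - Real.exp (v * 0) * deriv U 0 := by
    have := intervalIntegral.integral_eq_sub_of_hasDeriv_right_of_le (le_of_lt hb)
      (f := fun y => Real.exp (v * y) * deriv U y) (f' := fun _ => (0:ℝ))
      (Continuous.continuousOn (by exact (Real.continuous_exp.comp (continuous_const.mul continuous_id)).mul S.contU')) ?_ intervalIntegrable_const
    · simpa using this
    · intro x hx
      have hx0 : 0 < x := hx.1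
      have h1 : HasDerivAt (fun y => Real.exp (v * y) * deriv U y)
          (v * Real.exp (v * x) * deriv U x + Real.exp (v * x) * deriv (deriv U) x) x := by
        have he : HasDerivAt (fun y => Real.exp (v * y)) (v * Real.exp (v * x)) x := by
          exact ((Real.hasDerivAt_exp (v * x)).comp x
            ((hasDerivAt_id x).const_mul v)).congr_deriv (by ring)
        exact (he.mul (S.hasDerivU' (ne_of_gt hx0))).congr_deriv (by ring)
      have h2 : v * Real.exp (v * x) * deriv U x + Real.exp (v * x) * deriv (deriv U) x = 0 := by
        rw [S.ode_pos hx0]; ring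
      rw [h2] at h1
      exact h1.hasDerivWithinAt
  have h := key
  rw [mul_zero, Real.exp_zero, one_mul] at h
  linarith

lemma U0 (S : Setup f uc v U) : U 0 = uc := S.h.2.2.2.1

lemma deriv_formula (S : Setup f uc v U) {b : ℝ} (hb : 0 ≤ b) :
    deriv U b = deriv U 0 * Real.exp (-(v * b)) := by
  have h := S.deriv_exp hb
  have he : Real.exp (v * b) ≠ 0 := Real.exp_ne_zero _
  rw [Real.exp_neg]
  field_simp
  linarith [h]

lemma U_int (S : Setup f uc v U) {b : ℝ} (hb : 0 ≤ b) :
    U b = uc + ∫ s in (0:ℝ)..b, deriv U 0 * Real.exp (-(v * s)) := by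
  have h1 : ∫ y in (0:ℝ)..b, deriv U y = U b - U 0 :=
    intervalIntegral.integral_deriv_eq_sub
      (fun x _ => S.h.1.differentiable one_ne_zero x) (S.contU'.intervalIntegrable _ _)
  have h2 : ∫ y in (0:ℝ)..b, deriv U y = ∫ s in (0:ℝ)..b, deriv U 0 * Real.exp (-(v * s)) := by
    apply intervalIntegral.integral_congr
    intro x hx
    rw [Set.uIcc_of_le hb] at hx
    exact S.deriv_formula hx.1
  rw [h2] at h1
  rw [S.U0] at h1
  linarith

/-- The speed is positive, and `U'(0) = -v u_c`. -/
lemma speed_pos (S : Setup f uc v U) : 0 < v ∧ deriv U 0 = -v * uc := by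
  have huc0 : 0 < uc := S.huc.1
  have hvpos : 0 < v := by
    rcases eq_or_lt_of_le S.hv with rfl | h
    · exfalso
      set d0 := deriv U 0 with hd0
      have hU : ∀ b : ℝ, 0 ≤ b → U b = uc + b * d0 := by
        intro b hb
        have := S.U_int hb
        simpa [mul_comm] using this
      have hbd : ∀ b : ℝ, 0 < b → 0 ≤ U b ∧ U b ≤ uc := fun b hb => S.h.2.2.2.2.2.1 b hb
      have hd00 : d0 = 0 := by
        rcases lt_trichotomy d0 0 with hneg | hz | hpos
        · have hne : d0 ≠ 0 := ne_of_lt hneg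
          have hb : (0:ℝ) < (uc + 1) / (-d0) := div_pos (by linarith) (by linarith)
          have h1 := (hbd _ hb).1
          rw [hU _ (le_of_lt hb)] at h1
          have h2 : (uc + 1) / (-d0) * d0 = -(uc + 1) := by
            rw [div_mul_eq_mul_div, div_eq_iff (by linarith : -d0 ≠ 0)]
            ring
          linarith
        · exact hz
        · have hne : d0 ≠ 0 := ne_of_gt hpos
          have hb : (0:ℝ) < (uc + 1) / d0 := div_pos (by linarith) hpos
          have h2 := (hbd _ hb).2
          rw [hU _ (le_of_lt hb)] at h2
          have : (uc + 1) / d0 * d0 = uc + 1 := by field_simp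
          linarith
      have hUc : ∀ᶠ b in atTop, U b = uc := by
        filter_upwards [Filter.Ici_mem_atTop (0:ℝ)] with b hb
        rw [hU b hb, hd00]; ring
      have : Tendsto U atTop (𝓝 uc) := by
        rw [Filter.tendsto_congr' hUc]; exact tendsto_const_nhds
      have := tendsto_nhds_unique S.h.2.2.2.2.2.2.2 this
      linarith
    · exact h
  refine ⟨hvpos, ?_⟩
  set d0 := deriv U 0 with hd0
  have hint : ∀ b : ℝ, 0 ≤ b →
      (∫ s in (0:ℝ)..b, d0 * Real.exp (-(v * s))) = d0 / v - d0 / v * Real.exp (-(v * b)) := by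
    intro b hb
    have := intervalIntegral.integral_eq_sub_of_hasDerivAt
      (f := fun s => -(d0 / v) * Real.exp (-(v * s)))
      (f' := fun s => d0 * Real.exp (-(v * s))) (a := 0) (b := b) ?_ ?_
    · rw [this]
      simp
      ring
    · intro x _
      have he : HasDerivAt (fun s : ℝ => Real.exp (-(v * s))) (Real.exp (-(v * x)) * (-v)) x := by
        have h1 : HasDerivAt (fun s : ℝ => -(v * s)) (-v) x := by
          exact ((hasDerivAt_id x).const_mul v).neg.congr_deriv (by ring)
        exact (Real.hasDerivAt_exp (-(v * x))).comp x h1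
      have := he.const_mul (-(d0 / v))
      refine this.congr_deriv ?_
      rw [show -(d0 / v) * (Real.exp (-(v * x)) * -v) = d0 * (v / v) * Real.exp (-(v * x)) by ring,
        div_self (ne_of_gt hvpos), mul_one]
    · exact (continuous_const.mul
        (Real.continuous_exp.comp (continuous_const.mul continuous_id).neg)).intervalIntegrable _ _
  have hUf : ∀ᶠ b in atTop, U b = uc + (d0 / v - d0 / v * Real.exp (-(v * b))) := by
    filter_upwards [Filter.Ici_mem_atTop (0:ℝ)] with b hb
    rw [S.U_int hb, hint b hb]
  have hexp : Tendsto (fun b : ℝ => Real.exp (-(v * b))) atTop (𝓝 0) := by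
    apply Real.tendsto_exp_atBot.comp
    exact (tendsto_neg_atTop_atBot.comp (tendsto_id.const_mul_atTop hvpos))
  have hlim : Tendsto U atTop (𝓝 (uc + (d0 / v - d0 / v * 0))) := by
    rw [Filter.tendsto_congr' hUf]
    exact tendsto_const_nhds.add (tendsto_const_nhds.sub (hexp.const_mul _))
  have := tendsto_nhds_unique S.h.2.2.2.2.2.2.2 hlim
  have hv0 : v ≠ 0 := ne_of_gt hvpos
  field_simp at this ⊢
  linarith

lemma bounds_neg (S : Setup f uc v U) {y : ℝ} (hy : y < 0) : uc ≤ U y ∧ U y ≤ 1 :=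
  S.h.2.2.2.2.1 y hy

lemma le_one (S : Setup f uc v U) (y : ℝ) : U y ≤ 1 := by
  rcases lt_trichotomy y 0 with h | rfl | h
  · exact (S.bounds_neg h).2
  · rw [S.U0]; exact le_of_lt S.huc.2
  · exact le_trans (S.h.2.2.2.2.2.1 y h).2 (le_of_lt S.huc.2)

lemma f_one (S : Setup f uc v U) : f 1 = 0 := S.hf.2.2.1

lemma f_pos (S : Setup f uc v U) {u : ℝ} (h0 : 0 < u) (h1 : u < 1) : 0 < f u :=
  (S.hf.2.2.2.2.2.1 u h0 h1).1

end Setup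

/-- The vector field of the travelling-wave ODE is Lipschitz on `J ×ˢ univ`. -/
lemma lipschitz_field {f : ℝ → ℝ} {J : Set ℝ} {K : NNReal} (hf : LipschitzOnWith K f J)
    (v : ℝ) : ∃ K' : NNReal, LipschitzOnWith K'
      (fun z : ℝ × ℝ => (z.2, -v * z.2 - f z.1)) (J ×ˢ (univ : Set ℝ)) := by
  refine ⟨Real.toNNReal (1 + |v| + K), ?_⟩
  rw [lipschitzOnWith_iff_dist_le_mul]
  rintro ⟨z1, z2⟩ hz ⟨w1, w2⟩ hw
  have hz1 : z1 ∈ J := hz.1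
  have hw1 : w1 ∈ J := hw.1
  have hfK : |f z1 - f w1| ≤ K * |z1 - w1| := by
    have := lipschitzOnWith_iff_dist_le_mul.mp hf z1 hz1 w1 hw1
    simpa [Real.dist_eq] using this
  have h2 : |(-v * z2 - f z1) - (-v * w2 - f w1)| ≤ |v| * |z2 - w2| + K * |z1 - w1| := by
    have he : (-v * z2 - f z1) - (-v * w2 - f w1) = (-v) * (z2 - w2) + -(f z1 - f w1) := by ring
    rw [he]
    calc |(-v) * (z2 - w2) + -(f z1 - f w1)| ≤ |(-v) * (z2 - w2)| + |-(f z1 - f w1)| :=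
          abs_add_le _ _
      _ = |v| * |z2 - w2| + |f z1 - f w1| := by rw [abs_mul, abs_neg, abs_neg]
      _ ≤ |v| * |z2 - w2| + K * |z1 - w1| := by linarith
  have hK0 : (0:ℝ) ≤ K := K.coe_nonneg
  have hd1 : (0:ℝ) ≤ |z1 - w1| := abs_nonneg _
  have hd2 : (0:ℝ) ≤ |z2 - w2| := abs_nonneg _
  rw [Real.coe_toNNReal _ (by positivity), Prod.dist_eq, Prod.dist_eq]
  simp only [Real.dist_eq]
  apply max_le
  · nlinarith [le_max_left |z1 - w1| |z2 - w2|, le_max_right |z1 - w1| |z2 - w2|, abs_nonneg v]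
  · nlinarith [le_max_left |z1 - w1| |z2 - w2|, le_max_right |z1 - w1| |z2 - w2|, abs_nonneg v]

namespace Setup

/-- `U` never reaches `1`. -/
lemma lt_one (S : Setup f uc v U) (y : ℝ) : U y < 1 := by
  by_contra hc
  push_neg at hc
  have hUy : U y = 1 := le_antisymm (S.le_one y) hc
  have hy0 : y < 0 := by
    rcases lt_trichotomy y 0 with h | rfl | h
    · exact h
    · rw [S.U0] at hUy; exact absurd hUy (ne_of_lt S.huc.2)
    · have h2 := (S.h.2.2.2.2.2.1 y h).2
      rw [hUy] at h2
      exfalso; linarith [S.huc.2]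
  -- the set of points in [y, 0] where U = 1
  set T : Set ℝ := {z | z ∈ Icc y 0 ∧ U z = 1} with hT
  have hTne : T.Nonempty := ⟨y, ⟨le_rfl, le_of_lt hy0⟩, hUy⟩
  have hTbdd : BddAbove T := ⟨0, fun z hz => hz.1.2⟩
  have hTclosed : IsClosed T := by
    apply IsClosed.inter isClosed_Icc
    exact isClosed_eq S.contU continuous_const
  set m := sSup T with hm
  have hmT : m ∈ T := hTclosed.csSup_mem hTne hTbdd
  have hUm : U m = 1 := hmT.2
  have hm0 : m < 0 := by
    rcases lt_or_eq_of_le hmT.1.2 with h | h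
    · exact h
    · exfalso; rw [h, S.U0] at hUm; exact absurd hUm (ne_of_lt S.huc.2)
  have hder0 : deriv U m = 0 := by
    have hmax : IsLocalMax U m := by
      filter_upwards [Iio_mem_nhds hm0] with z hz
      rw [hUm]; exact S.le_one z
    exact hmax.deriv_eq_zero
  -- Lipschitz neighbourhood of 1 for f
  obtain ⟨K, t, ht, hK⟩ := (S.hf.1.contDiffAt (x := 1)).exists_lipschitzOnWith
  obtain ⟨ε₀, hε₀, hball⟩ := Metric.mem_nhds_iff.mp ht
  set a₁ : ℝ := max uc (1 - ε₀ / 2) with ha₁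
  have ha₁uc : uc ≤ a₁ := le_max_left _ _
  have ha₁lt : a₁ < 1 := by
    apply max_lt S.huc.2; linarith
  set J : Set ℝ := Icc a₁ 1 with hJ
  have hJt : J ⊆ t := by
    intro x hx
    apply hball
    rw [Metric.mem_ball, Real.dist_eq, abs_sub_lt_iff]
    constructor
    · linarith [hx.2]
    · have : 1 - ε₀ / 2 ≤ a₁ := le_max_right _ _
      have := hx.1
      linarith
  obtain ⟨K', hK'⟩ := lipschitz_field (hK.mono hJt) v
  -- choose δ so that U stays above a₁ on (m - δ, m + δ) and this interval is in Iio 0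
  have hev : ∀ᶠ z in 𝓝 m, a₁ < U z ∧ z < 0 := by
    have h1 : ∀ᶠ z in 𝓝 m, a₁ < U z := by
      have hmem : U ⁻¹' (Set.Ioi a₁) ∈ 𝓝 m :=
        S.contU.continuousAt.preimage_mem_nhds (by rw [hUm]; exact Ioi_mem_nhds ha₁lt)
      filter_upwards [hmem] with z hz using hz
    exact h1.and (Iio_mem_nhds hm0)
  obtain ⟨δ, hδpos, hδ⟩ := Metric.eventually_nhds_iff.mp hev
  set b := m + δ / 2 with hb
  have hmb : m < b := by rw [hb]; linarith
  have hbprop : a₁ < U b ∧ b < 0 := hδ (by rw [Real.dist_eq]; rw [hb]; rw [abs_of_pos] <;> linarith)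
  -- apply uniqueness of ODE solutions
  have key : EqOn (fun z => (U z, deriv U z)) (fun _ => ((1:ℝ), (0:ℝ))) (Icc m b) := by
    apply ODE_solution_unique_of_mem_Icc_right
      (v := fun _ z => (z.2, -v * z.2 - f z.1)) (s := fun _ => J ×ˢ (univ : Set ℝ))
      (K := K') (fun _ _ => hK')
    · exact (S.contU.prodMk S.contU').continuousOn
    · intro z hz
      have hzm : dist z m < δ := by
        rw [Real.dist_eq, abs_sub_lt_iff]
        constructor
        · have := hz.2; rw [hb] at this; linarith
        · linarith [hz.1]
      have hz0 : z < 0 := (hδ hzm).2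
      have hza : a₁ < U z := (hδ hzm).1
      have hder : HasDerivAt (fun w => (U w, deriv U w)) (deriv U z, deriv (deriv U) z) z :=
        (S.hasDerivU z).prodMk (S.hasDerivU' (ne_of_lt hz0))
      have heq : deriv (deriv U) z = -v * deriv U z - f (U z) := by
        rw [S.ode (ne_of_lt hz0), cutoff, if_pos (lt_of_le_of_lt ha₁uc hza)]
      rw [heq] at hder
      exact hder.hasDerivWithinAt
    · intro z hz
      have hzm : dist z m < δ := by
        rw [Real.dist_eq, abs_sub_lt_iff]
        constructor
        · have := hz.2; rw [hb] at this; linarith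
        · linarith [hz.1]
      have hz0 : z < 0 := (hδ hzm).2
      exact ⟨⟨le_of_lt (hδ hzm).1, S.le_one z⟩, mem_univ _⟩
    · exact continuousOn_const
    · intro z _
      have hcst : HasDerivWithinAt (fun _ : ℝ => ((1:ℝ), (0:ℝ))) ((0:ℝ), (0:ℝ)) (Ici z) z :=
        (hasDerivAt_const _ _).hasDerivWithinAt
      refine hcst.congr_deriv ?_
      simp [S.f_one]
    · intro z _
      exact ⟨⟨ha₁lt.le, le_rfl⟩, mem_univ _⟩
    · simp [hUm, hder0]
  have hbT : b ∈ T := by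
    have hkey := key (right_mem_Icc.mpr (le_of_lt hmb))
    have hUb : U b = 1 := by simpa using congrArg Prod.fst hkey
    exact ⟨⟨le_trans hmT.1.1 (le_of_lt hmb), le_of_lt hbprop.2⟩, hUb⟩
  have : b ≤ m := le_csSup hTbdd hbT
  linarith

/-- `U' < 0` on `(-∞, 0]`. -/
lemma deriv_neg (S : Setup f uc v U) : ∀ y ≤ 0, deriv U y < 0 := by
  have prop : ∀ z ≤ 0, deriv U z < 0 → ∀ y ∈ Icc z 0, deriv U y < 0 := by
    intro z hz0 hdz
    by_contra hcon
    push_neg at hcon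
    obtain ⟨y, hy, hdy⟩ := hcon
    set T : Set ℝ := {w | w ∈ Icc z 0 ∧ 0 ≤ deriv U w} with hT
    have hTne : T.Nonempty := ⟨y, hy, hdy⟩
    have hTbdd : BddBelow T := ⟨z, fun w hw => hw.1.1⟩
    have hTclosed : IsClosed T :=
      IsClosed.inter isClosed_Icc (isClosed_le continuous_const S.contU')
    set m := sInf T with hm
    have hmT : m ∈ T := hTclosed.csInf_mem hTne hTbdd
    have hmz : z < m := by
      rcases lt_or_eq_of_le hmT.1.1 with h | h
      · exact h
      · exfalso; rw [← h] at hmT; linarith [hmT.2]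
    have hm0 : m ≤ 0 := hmT.1.2
    have hlt : ∀ w ∈ Ico z m, deriv U w < 0 := by
      intro w hw
      by_contra hcc
      push_neg at hcc
      have : w ∈ T := ⟨⟨hw.1, le_trans (le_of_lt hw.2) hm0⟩, hcc⟩
      have := csInf_le hTbdd this
      linarith [hw.2]
    have hdm : deriv U m = 0 := by
      refine le_antisymm ?_ hmT.2
      have hne : (𝓝[<] m).NeBot := nhdsLT_neBot m
      refine le_of_tendsto (S.contU'.continuousAt.continuousWithinAt (s := Iio m)) ?_
      filter_upwards [Ioo_mem_nhdsLT hmz] with w hw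
      exact le_of_lt (hlt w ⟨le_of_lt hw.1, hw.2⟩)
    -- U is strictly decreasing on [z, m]
    have hanti : StrictAntiOn U (Icc z m) := by
      apply strictAntiOn_of_deriv_neg (convex_Icc z m) S.contU.continuousOn
      intro w hw
      rw [interior_Icc] at hw
      exact hlt w ⟨le_of_lt hw.1, hw.2⟩
    have hUmge : uc ≤ U m := by
      rcases lt_or_eq_of_le hm0 with h | h
      · exact (S.bounds_neg h).1
      · rw [h, S.U0]
    have hUm1 : U m < 1 := S.lt_one m
    have hc : 0 < f (U m) := S.f_pos (lt_of_lt_of_le S.huc.1 hUmge) hUm1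
    set c := f (U m) with hcdef
    -- on a left neighbourhood of m, deriv (deriv U) < -c/2
    have hg : ∀ᶠ w in 𝓝 m, -v * deriv U w - f (U w) < -c / 2 := by
      have hcont : ContinuousAt (fun w => -v * deriv U w - f (U w)) m := by
        apply ContinuousAt.sub
        · exact (continuousAt_const.mul S.contU'.continuousAt)
        · exact (S.contf.continuousAt).comp S.contU.continuousAt
      have hval : -v * deriv U m - f (U m) = -c := by rw [hdm]; ring
      have hmem : (fun w => -v * deriv U w - f (U w)) ⁻¹' (Iio (-c / 2)) ∈ 𝓝 m := by
        apply hcont.preimage_mem_nhds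
        rw [hval]
        exact Iio_mem_nhds (by linarith)
      filter_upwards [hmem] with w hw using hw
    obtain ⟨δ', hδ'pos, hδ'⟩ := Metric.eventually_nhds_iff.mp hg
    set a := m - min δ' (m - z) / 2 with ha
    have hmin : 0 < min δ' (m - z) := lt_min hδ'pos (by linarith)
    have haz : z < a := by
      have : min δ' (m - z) ≤ m - z := min_le_right _ _
      rw [ha]; linarith
    have ham : a < m := by rw [ha]; linarith
    have hdd : ∀ w ∈ Ioo a m, deriv (deriv U) w < 0 := by
      intro w hw
      have hw0 : w < 0 := lt_of_lt_of_le hw.2 hm0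
      have hwz : z < w := lt_trans haz hw.1
      have hdist : dist w m < δ' := by
        rw [Real.dist_eq, abs_sub_lt_iff]
        have h1 : min δ' (m - z) ≤ δ' := min_le_left _ _
        constructor
        · linarith [hw.2]
        · have := hw.1; rw [ha] at this; linarith
      have hUwgt : uc < U w := by
        calc uc ≤ U m := hUmge
          _ < U w := hanti ⟨le_of_lt hwz, le_of_lt hw.2⟩ ⟨le_of_lt hmz, le_rfl⟩ hw.2
      have hode := S.ode (ne_of_lt hw0)
      rw [hode, cutoff, if_pos hUwgt]
      have := hδ' hdist
      linarith
    -- deriv U is strictly decreasing on [a, m], contradiction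
    have hanti2 : StrictAntiOn (deriv U) (Icc a m) := by
      apply strictAntiOn_of_deriv_neg (convex_Icc a m) S.contU'.continuousOn
      intro w hw
      rw [interior_Icc] at hw
      exact hdd w hw
    have h1 : deriv U m < deriv U a :=
      hanti2 ⟨le_rfl, le_of_lt ham⟩ ⟨le_of_lt ham, le_rfl⟩ ham
    have h2 : deriv U a < 0 := hlt a ⟨le_of_lt haz, ham⟩
    rw [hdm] at h1
    linarith
  intro y hy
  have hex : ∃ z ≤ y, deriv U z < 0 := by
    by_contra hno
    push_neg at hno
    have hmono : MonotoneOn U (Iic y) := by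
      apply monotoneOn_of_deriv_nonneg (convex_Iic y) S.contU.continuousOn
      · exact fun w _ => (S.h.1.differentiable one_ne_zero w).differentiableWithinAt
      · intro w hw
        rw [interior_Iic] at hw
        exact hno w (le_of_lt hw)
    have h1 : (1:ℝ) ≤ U y := by
      apply le_of_tendsto S.h.2.2.2.2.2.2.1
      filter_upwards [Iic_mem_atBot y] with z hz
      exact hmono hz self_mem_Iic hz
    linarith [S.lt_one y]
  obtain ⟨z, hzy, hdz⟩ := hex
  exact prop z (le_trans hzy hy) hdz y ⟨hzy, hy⟩

lemma strictAntiU (S : Setup f uc v U) : StrictAntiOn U (Iic 0) := by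
  apply strictAntiOn_of_deriv_neg (convex_Iic 0) S.contU.continuousOn
  intro y hy
  rw [interior_Iic] at hy
  exact S.deriv_neg y (le_of_lt hy)

lemma gt_uc (S : Setup f uc v U) {y : ℝ} (hy : y < 0) : uc < U y := by
  have := S.strictAntiU (mem_Iic.mpr (le_of_lt hy)) (mem_Iic.mpr le_rfl) hy
  rwa [S.U0] at this

end Setup

/-- `F(u) = ∫_{u_c}^u f`. -/
noncomputable def Fint (f : ℝ → ℝ) (uc : ℝ) : ℝ → ℝ := fun u => ∫ t in uc..u, f t

/-- The energy `E(y) = U'(y)²/2 + F(U(y))`. -/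
noncomputable def En (f : ℝ → ℝ) (uc : ℝ) (U : ℝ → ℝ) : ℝ → ℝ :=
  fun y => deriv U y * deriv U y / 2 + Fint f uc (U y)

namespace Setup

lemma hasDerivFint (S : Setup f uc v U) (u : ℝ) : HasDerivAt (Fint f uc) (f u) u :=
  (S.contf.integral_hasStrictDerivAt uc u).hasDerivAt

lemma contFint (S : Setup f uc v U) : Continuous (Fint f uc) := by
  have : Differentiable ℝ (Fint f uc) := fun u => (S.hasDerivFint u).differentiableAt
  exact this.continuous

lemma Fint_uc (S : Setup f uc v U) : Fint f uc uc = 0 := intervalIntegral.integral_same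

lemma f_nonneg (S : Setup f uc v U) {u : ℝ} (h0 : 0 < u) (h1 : u ≤ 1) : 0 ≤ f u := by
  rcases lt_or_eq_of_le h1 with h | h
  · exact le_of_lt (S.f_pos h0 h)
  · rw [h, S.f_one]

lemma Fint_le_one (S : Setup f uc v U) {u : ℝ} (h0 : uc ≤ u) (h1 : u ≤ 1) :
    Fint f uc u ≤ Fint f uc 1 := by
  have huc0 : 0 < uc := S.huc.1
  have hadd : (∫ t in uc..u, f t) + ∫ t in u..1, f t = ∫ t in uc..1, f t :=
    intervalIntegral.integral_add_adjacent_intervals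
      (S.contf.intervalIntegrable _ _) (S.contf.intervalIntegrable _ _)
  have hnn : 0 ≤ ∫ t in u..1, f t := by
    apply intervalIntegral.integral_nonneg h1
    intro x hx
    exact S.f_nonneg (lt_of_lt_of_le huc0 (le_trans h0 hx.1)) hx.2
  unfold Fint
  linarith

lemma hasDerivEn (S : Setup f uc v U) {y : ℝ} (hy : y < 0) :
    HasDerivAt (En f uc U) (-v * (deriv U y * deriv U y)) y := by
  have h1 : HasDerivAt (fun w => deriv U w * deriv U w / 2)
      (deriv U y * deriv (deriv U) y) y := by
    have := ((S.hasDerivU' (ne_of_lt hy)).mul (S.hasDerivU' (ne_of_lt hy))).div_const 2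
    refine this.congr_deriv ?_
    ring
  have h2 : HasDerivAt (fun w => Fint f uc (U w)) (f (U y) * deriv U y) y :=
    (S.hasDerivFint (U y)).comp y (S.hasDerivU y)
  have h3 := h1.add h2
  have hval : deriv U y * deriv (deriv U) y + f (U y) * deriv U y
      = -v * (deriv U y * deriv U y) := by
    rw [S.ode (ne_of_lt hy), cutoff, if_pos (S.gt_uc hy)]
    ring
  rw [hval] at h3
  exact h3

lemma contEn (S : Setup f uc v U) : Continuous (En f uc U) := by
  exact ((S.contU'.mul S.contU').div_const 2).add (S.contFint.comp S.contU)

lemma antiEn (S : Setup f uc v U) : AntitoneOn (En f uc U) (Iic 0) := by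
  apply antitoneOn_of_deriv_nonpos (convex_Iic 0) S.contEn.continuousOn
  · intro y hy
    rw [interior_Iic] at hy
    exact (S.hasDerivEn hy).differentiableAt.differentiableWithinAt
  · intro y hy
    rw [interior_Iic] at hy
    rw [(S.hasDerivEn hy).deriv]
    have := mul_self_nonneg (deriv U y)
    nlinarith [S.hv]

lemma uc_le (S : Setup f uc v U) {y : ℝ} (hy : y ≤ 0) : uc ≤ U y := by
  rcases lt_or_eq_of_le hy with h | h
  · exact (S.bounds_neg h).1
  · rw [h, S.U0]

lemma no_blowup (S : Setup f uc v U) {b y₁ : ℝ} (hb : 0 < b) (hy₁ : y₁ ≤ 0) :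
    ¬ (∀ y ≤ y₁, deriv U y ≤ -b) := by
  intro hall
  have hanti : AntitoneOn (fun y => U y + b * y) (Iic y₁) := by
    apply antitoneOn_of_deriv_nonpos (convex_Iic y₁)
    · exact (S.contU.add (continuous_const.mul continuous_id)).continuousOn
    · intro w hw
      exact ((S.h.1.differentiable one_ne_zero w).add
        ((differentiable_const b).mul differentiable_id w)).differentiableWithinAt
    · intro w hw
      rw [interior_Iic] at hw
      have hd : HasDerivAt (fun y => U y + b * y) (deriv U w + b) w := by
        exact ((S.hasDerivU w).add ((hasDerivAt_id w).const_mul b)).congr_deriv (by ring)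
      rw [hd.deriv]
      linarith [hall w (le_of_lt hw)]
  set y := y₁ - 2 / b with hydef
  have hylt : y < y₁ := by
    have : 0 < 2 / b := by positivity
    rw [hydef]; linarith
  have := hanti (mem_Iic.mpr (le_of_lt hylt)) (mem_Iic.mpr le_rfl) (le_of_lt hylt)
  -- U y₁ + b y₁ ≤ U y + b y, so U y ≥ U y₁ + b (y₁ - y) = U y₁ + 2
  have hby : b * (y₁ - y) = 2 := by
    rw [hydef]; field_simp
    ring
  have h5 : U y₁ + b * y₁ ≤ U y + b * y := this
  have hUy : U y₁ + 2 ≤ U y := by nlinarith [h5, hby]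
  have h1 : uc ≤ U y₁ := S.uc_le hy₁
  have h2 : U y ≤ 1 := S.le_one y
  have := S.huc.1
  linarith

lemma deriv_tendsto (S : Setup f uc v U) : Tendsto (deriv U) atBot (𝓝 0) := by
  set E := En f uc U with hE
  set Et : ℝ → ℝ := fun y => E (min y (-1)) with hEt
  have hEt_anti : Antitone Et := by
    intro y y' hyy
    exact S.antiEn (mem_Iic.mpr (le_trans (min_le_right _ _) (by norm_num)))
      (mem_Iic.mpr (le_trans (min_le_right _ _) (by norm_num)))
      (min_le_min hyy le_rfl)
  have hEeq : ∀ᶠ y in atBot, Et y = E y := by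
    filter_upwards [Iic_mem_atBot (-1:ℝ)] with y hy
    rw [hEt]
    simp only [min_eq_left (mem_Iic.mp hy)]
  set q : ℝ → ℝ := fun y => deriv U y * deriv U y with hq
  have hqE : ∀ y, q y = 2 * (E y - Fint f uc (U y)) := by
    intro y; rw [hq, hE]; simp [En]; ring
  have hqnn : ∀ y, 0 ≤ q y := fun y => mul_self_nonneg _
  have hFU : Tendsto (fun y => Fint f uc (U y)) atBot (𝓝 (Fint f uc 1)) :=
    (S.contFint.tendsto 1).comp S.h.2.2.2.2.2.2.1
  have hbdd : BddAbove (range Et) := by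
    by_contra hnb
    have hg_mono : Monotone (fun y => Et (-y)) := fun a b hab => hEt_anti (by linarith)
    have hg_nb : ¬ BddAbove (range fun y => Et (-y)) := by
      rintro ⟨M, hM⟩
      apply hnb
      refine ⟨M, ?_⟩
      rintro x ⟨y, rfl⟩
      exact hM ⟨-y, by simp⟩
    have hgtop : Tendsto (fun y => Et (-y)) atTop atTop :=
      tendsto_atTop_atTop_of_monotone' hg_mono hg_nb
    have hEtop : Tendsto Et atBot atTop := by
      have hneg : Tendsto (fun y : ℝ => -y) atBot atTop := tendsto_neg_atBot_atTop
      have h2 := hgtop.comp hneg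
      exact Tendsto.congr (fun y => by simp) h2
    have hqbig : ∀ᶠ y in atBot, 4 ≤ q y := by
      have h4 : ∀ᶠ y in atBot, Fint f uc 1 + 2 ≤ Et y :=
        hEtop.eventually (eventually_ge_atTop _)
      filter_upwards [h4, hEeq, Iio_mem_atBot (0:ℝ)] with y h1 h2 h3
      have hFle : Fint f uc (U y) ≤ Fint f uc 1 :=
        S.Fint_le_one (S.uc_le (le_of_lt h3)) (S.le_one y)
      rw [hqE y]
      rw [h2] at h1
      linarith
    obtain ⟨y₁, hy₁⟩ := eventually_atBot.mp (hqbig.and (Iio_mem_atBot (0:ℝ)))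
    set y₂ := min y₁ 0 with hy₂
    refine S.no_blowup (by norm_num : (0:ℝ) < 2) (min_le_right y₁ 0) ?_
    intro y hy
    have hyy₁ : y ≤ y₁ := le_trans hy (min_le_left _ _)
    obtain ⟨h4, h0⟩ := hy₁ y hyy₁
    have hdneg : deriv U y < 0 := S.deriv_neg y (le_of_lt h0)
    have h4' : 4 ≤ deriv U y * deriv U y := h4
    nlinarith [h4', hdneg]
  -- bounded case
  set ℓ := ⨆ y, Et y with hℓ
  have hEt_tendsto : Tendsto Et atBot (𝓝 ℓ) := tendsto_atBot_ciSup hEt_anti hbdd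
  have hE_tendsto : Tendsto E atBot (𝓝 ℓ) := by
    rwa [← Filter.tendsto_congr' hEeq]
  set cc := 2 * (ℓ - Fint f uc 1) with hcc
  have hq_tendsto : Tendsto q atBot (𝓝 cc) := by
    have : Tendsto (fun y => 2 * (E y - Fint f uc (U y))) atBot (𝓝 (2 * (ℓ - Fint f uc 1))) :=
      (hE_tendsto.sub hFU).const_mul 2
    simpa [← hqE] using this
  have hcc0 : 0 ≤ cc := ge_of_tendsto hq_tendsto (Eventually.of_forall hqnn)
  have hcc_eq : cc = 0 := by
    by_contra hne
    have hccpos : 0 < cc := lt_of_le_of_ne hcc0 (Ne.symm hne)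
    set s := Real.sqrt (cc / 2) with hs
    have hspos : 0 < s := Real.sqrt_pos.mpr (by linarith)
    have hss : s * s = cc / 2 := Real.mul_self_sqrt (by linarith)
    have hev : ∀ᶠ y in atBot, cc / 2 < q y :=
      hq_tendsto.eventually (eventually_gt_nhds (by linarith))
    obtain ⟨y₁, hy₁⟩ := eventually_atBot.mp (hev.and (Iio_mem_atBot (0:ℝ)))
    refine S.no_blowup hspos (min_le_right y₁ 0) (y₁ := min y₁ 0) ?_
    intro y hy
    obtain ⟨h4, h0⟩ := hy₁ y (le_trans hy (min_le_left _ _))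
    have hdneg : deriv U y < 0 := S.deriv_neg y (le_of_lt h0)
    have h4' : cc / 2 < deriv U y * deriv U y := h4
    nlinarith [h4', hdneg, hss, hspos]
  have hq0 : Tendsto q atBot (𝓝 0) := by rwa [hcc_eq] at hq_tendsto
  have hsq : Tendsto (fun y => Real.sqrt (q y)) atBot (𝓝 0) := by
    have := (Real.continuous_sqrt.tendsto 0).comp hq0
    simpa [Function.comp_def] using this
  have hfinal : ∀ᶠ y in atBot, deriv U y = -Real.sqrt (q y) := by
    filter_upwards [Iic_mem_atBot (0:ℝ)] with y hy
    have hdneg : deriv U y < 0 := S.deriv_neg y hy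
    rw [hq]
    rw [Real.sqrt_mul_self_eq_abs, abs_of_neg hdneg]
    ring
  rw [Filter.tendsto_congr' hfinal]
  simpa using hsq.neg

end Setup

/-- The inverse of `U` on `(-∞, 0]`. -/
noncomputable def Yinv (U : ℝ → ℝ) (u : ℝ) : ℝ := sSup {y | y ≤ 0 ∧ U y = u}

namespace Setup

lemma U_lt_U (S : Setup f uc v U) {y z : ℝ} (hy : y ≤ 0) (hz : z ≤ 0) :
    U z < U y ↔ y < z := by
  constructor
  · intro h
    by_contra hc
    push_neg at hc
    rcases lt_or_eq_of_le hc with h2 | h2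
    · have := S.strictAntiU (mem_Iic.mpr hz) (mem_Iic.mpr hy) h2
      linarith
    · rw [h2] at h; linarith
  · intro h
    exact S.strictAntiU (mem_Iic.mpr hy) (mem_Iic.mpr hz) h

lemma Yinv_eq (S : Setup f uc v U) {y u : ℝ} (hy : y ≤ 0) (hU : U y = u) :
    Yinv U u = y := by
  have hset : {y' | y' ≤ 0 ∧ U y' = u} = {y} := by
    ext w
    simp only [mem_setOf_eq, mem_singleton_iff]
    constructor
    · rintro ⟨hw, hUw⟩
      exact S.strictAntiU.injOn (mem_Iic.mpr hw) (mem_Iic.mpr hy) (by rw [hUw, hU])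
    · rintro rfl
      exact ⟨hy, hU⟩
  rw [Yinv, hset, csSup_singleton]

lemma exists_inv (S : Setup f uc v U) {u : ℝ} (hu : u ∈ Ico uc 1) :
    ∃ y, y ≤ 0 ∧ U y = u := by
  have hev : ∀ᶠ z in atBot, u < U z :=
    S.h.2.2.2.2.2.2.1.eventually (eventually_gt_nhds hu.2)
  obtain ⟨z, hz⟩ := eventually_atBot.mp (hev.and (Iic_mem_atBot (0:ℝ)))
  obtain ⟨hzu, hz0⟩ := hz z le_rfl
  have hmem : u ∈ Icc (U 0) (U z) := by
    rw [S.U0]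
    exact ⟨hu.1, le_of_lt hzu⟩
  obtain ⟨y, hy, hUy⟩ := intermediate_value_Icc' hz0 S.contU.continuousOn hmem
  exact ⟨y, hy.2, hUy⟩

lemma Yinv_spec (S : Setup f uc v U) {u : ℝ} (hu : u ∈ Ico uc 1) :
    Yinv U u ≤ 0 ∧ U (Yinv U u) = u := by
  obtain ⟨y, hy0, hUy⟩ := S.exists_inv hu
  rw [S.Yinv_eq hy0 hUy]
  exact ⟨hy0, hUy⟩

lemma Yinv_uc (S : Setup f uc v U) : Yinv U uc = 0 := S.Yinv_eq le_rfl S.U0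

lemma Yinv_neg (S : Setup f uc v U) {u : ℝ} (hu : u ∈ Ioo uc 1) : Yinv U u < 0 := by
  have hspec := S.Yinv_spec (Ioo_subset_Ico_self hu)
  rcases lt_or_eq_of_le hspec.1 with h | h
  · exact h
  · exfalso
    rw [h, S.U0] at hspec
    exact absurd hspec.2 (ne_of_lt hu.1)

lemma Yinv_continuousAt (S : Setup f uc v U) {u₀ : ℝ} (hu₀ : u₀ ∈ Ioo uc 1) :
    ContinuousAt (Yinv U) u₀ := by
  rw [Metric.continuousAt_iff]
  intro ε hε
  set a := Yinv U u₀ with hadef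
  have hspec := S.Yinv_spec (Ioo_subset_Ico_self hu₀)
  have ha0 : a < 0 := S.Yinv_neg hu₀
  have haU : U a = u₀ := hspec.2
  set ε' := min (ε / 2) (-a / 2) with hε'def
  have hε' : 0 < ε' := lt_min (by linarith) (by linarith)
  have hae : a + ε' ≤ 0 := by
    have : ε' ≤ -a / 2 := min_le_right _ _
    linarith
  have hae' : a - ε' ≤ 0 := by linarith
  have h1 : u₀ < U (a - ε') := by
    rw [← haU]
    exact (S.U_lt_U hae' (by linarith : a ≤ (0:ℝ))).mpr (by linarith)
  have h2 : U (a + ε') < u₀ := by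
    rw [← haU]
    exact (S.U_lt_U (by linarith : a ≤ (0:ℝ)) hae).mpr (by linarith)
  set δ := min (U (a - ε') - u₀) (u₀ - U (a + ε')) with hδdef
  refine ⟨δ, lt_min (by linarith) (by linarith), ?_⟩
  intro u hu
  rw [Real.dist_eq, abs_sub_lt_iff] at hu
  have hu_hi : u < U (a - ε') := by
    have : δ ≤ U (a - ε') - u₀ := min_le_left _ _
    linarith [hu.1]
  have hu_lo : U (a + ε') < u := by
    have : δ ≤ u₀ - U (a + ε') := min_le_right _ _
    linarith [hu.2]
  have hu_mem : u ∈ Ico uc 1 := by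
    constructor
    · exact le_trans (S.uc_le hae) (le_of_lt hu_lo)
    · exact lt_trans hu_hi (S.lt_one _)
  have hbspec := S.Yinv_spec hu_mem
  set b := Yinv U u with hbdef
  have hb1 : a - ε' < b := by
    have : U b < U (a - ε') := by rw [hbspec.2]; exact hu_hi
    exact (S.U_lt_U hae' hbspec.1).mp this
  have hb2 : b < a + ε' := by
    have : U (a + ε') < U b := by rw [hbspec.2]; exact hu_lo
    exact (S.U_lt_U hbspec.1 hae).mp this
  rw [Real.dist_eq, abs_sub_lt_iff]
  have hε'2 : ε' ≤ ε / 2 := min_le_left _ _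
  constructor <;> [skip; skip] <;> linarith

lemma Yinv_continuousOn (S : Setup f uc v U) : ContinuousOn (Yinv U) (Ico uc 1) := by
  intro u hu
  rcases lt_or_eq_of_le hu.1 with h | h
  · exact (S.Yinv_continuousAt ⟨h, hu.2⟩).continuousWithinAt
  · -- u = uc
    rw [← h]
    rw [← h] at hu
    rw [Metric.continuousWithinAt_iff]
    intro ε hε
    set ε' := min (ε / 2) 1 with hε'def
    have hε' : 0 < ε' := lt_min (by linarith) one_pos
    have hne : -ε' < 0 := by linarith
    have hgt : uc < U (-ε') := S.gt_uc hne
    refine ⟨U (-ε') - uc, by linarith, ?_⟩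
    intro w hw hwd
    rw [Real.dist_eq, abs_sub_lt_iff] at hwd
    have hw_hi : w < U (-ε') := by linarith [hwd.1]
    have hw_mem : w ∈ Ico uc 1 := ⟨hw.1, lt_trans hw_hi (S.lt_one _)⟩
    have hbspec := S.Yinv_spec hw_mem
    have hb1 : -ε' < Yinv U w := by
      have : U (Yinv U w) < U (-ε') := by rw [hbspec.2]; exact hw_hi
      exact (S.U_lt_U (le_of_lt hne) hbspec.1).mp this
    rw [Real.dist_eq, S.Yinv_uc, abs_sub_lt_iff]
    have hε'2 : ε' ≤ ε / 2 := min_le_left _ _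
    constructor <;> linarith [hbspec.1]

lemma Yinv_tendsto (S : Setup f uc v U) : Tendsto (Yinv U) (𝓝[<] (1:ℝ)) atBot := by
  rw [tendsto_atBot]
  intro b
  set b' := min b 0 with hb'def
  have hb'0 : b' ≤ 0 := min_le_right _ _
  have hUb' : U b' < 1 := S.lt_one b'
  have hlt : max uc (U b') < 1 := max_lt S.huc.2 hUb'
  filter_upwards [Ioo_mem_nhdsLT hlt] with u hu
  have hu_mem : u ∈ Ico uc 1 := ⟨le_of_lt (lt_of_le_of_lt (le_max_left _ _) hu.1), hu.2⟩
  have hbspec := S.Yinv_spec hu_mem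
  have : U b' < U (Yinv U u) := by
    rw [hbspec.2]
    exact lt_of_le_of_lt (le_max_right uc (U b')) hu.1
  have := (S.U_lt_U hbspec.1 hb'0).mp this
  calc Yinv U u ≤ b' := le_of_lt this
    _ ≤ b := min_le_left _ _

lemma p_continuousOn (S : Setup f uc v U) :
    ContinuousOn (fun u => deriv U (Yinv U u)) (Ico uc 1) :=
  S.contU'.comp_continuousOn S.Yinv_continuousOn

/-- The phase-plane energy identity. -/
lemma energy (S : Setup f uc v U) {u : ℝ} (hu : u ∈ Ico uc 1) :
    deriv U (Yinv U u) * deriv U (Yinv U u) / 2 + Fint f uc u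
      = v * uc * (v * uc) / 2 - v * ∫ w in uc..u, deriv U (Yinv U w) := by
  obtain ⟨ha0, haU⟩ := S.Yinv_spec hu
  set a := Yinv U u with hadef
  -- Step 1 : energy dissipation identity
  have step1 : (∫ y in a..0, -v * (deriv U y * deriv U y))
      = En f uc U 0 - En f uc U a := by
    apply intervalIntegral.integral_eq_sub_of_hasDeriv_right_of_le ha0
      S.contEn.continuousOn
    · intro x hx
      exact (S.hasDerivEn hx.2).hasDerivWithinAt
    · exact (continuous_const.mul (S.contU'.mul S.contU')).intervalIntegrable _ _
  -- Step 2 : change of variables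
  have himg : U '' (uIcc a 0) ⊆ Ico uc 1 := by
    rintro w ⟨y, hy, rfl⟩
    rw [uIcc_of_le ha0] at hy
    exact ⟨S.uc_le hy.2, S.lt_one y⟩
  have step2 : (∫ y in a..0, deriv U y • ((fun w => deriv U (Yinv U w)) ∘ U) y)
      = ∫ w in (U a)..(U 0), deriv U (Yinv U w) := by
    apply intervalIntegral.integral_comp_smul_deriv'' S.contU.continuousOn
    · intro x hx
      have : x ∈ Ioo a 0 := by
        rwa [min_eq_left ha0, max_eq_right ha0] at hx
      exact (S.hasDerivU x).hasDerivWithinAt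
    · exact S.contU'.continuousOn
    · exact S.p_continuousOn.mono himg
  -- Step 3 : the integrands agree
  have step3 : (∫ y in a..0, deriv U y • ((fun w => deriv U (Yinv U w)) ∘ U) y)
      = ∫ y in a..0, deriv U y * deriv U y := by
    apply intervalIntegral.integral_congr
    intro y hy
    rw [uIcc_of_le ha0] at hy
    simp only [smul_eq_mul, Function.comp]
    rw [S.Yinv_eq hy.2 rfl]
  have hE0 : En f uc U 0 = v * uc * (v * uc) / 2 := by
    rw [En, S.U0, S.Fint_uc, S.speed_pos.2]
    ring
  have hEa : En f uc U a = deriv U a * deriv U a / 2 + Fint f uc u := by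
    rw [En, haU]
  have hsymm : (∫ w in (U a)..(U 0), deriv U (Yinv U w))
      = -∫ w in uc..u, deriv U (Yinv U w) := by
    rw [haU, S.U0, intervalIntegral.integral_symm]
  have hconst : (∫ y in a..0, -v * (deriv U y * deriv U y))
      = -v * ∫ y in a..0, deriv U y * deriv U y := intervalIntegral.integral_const_mul _ _
  rw [hconst] at step1
  rw [step3, hsymm] at step2
  rw [step2] at step1
  rw [hE0, hEa] at step1
  linarith

end Setup

/-- The key comparison: a faster wave's phase-plane trajectory stays strictly below. -/
lemma speed_not_lt (f : ℝ → ℝ) (hf : IsKPP f) (uc : ℝ) (huc : uc ∈ Set.Ioo (0:ℝ) 1)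
    {v₁ v₂ : ℝ} (hv₁ : 0 ≤ v₁) (hv₂ : 0 ≤ v₂) {U₁ U₂ : ℝ → ℝ}
    (h₁ : IsPTW f uc v₁ U₁) (h₂ : IsPTW f uc v₂ U₂) (hlt : v₂ < v₁) : False := by
  have S₁ : Setup f uc v₁ U₁ := ⟨hf, huc, h₁, hv₁⟩
  have S₂ : Setup f uc v₂ U₂ := ⟨hf, huc, h₂, hv₂⟩
  have hv₂pos : 0 < v₂ := S₂.speed_pos.1
  have hv₁pos : 0 < v₁ := S₁.speed_pos.1
  set p₁ : ℝ → ℝ := fun u => deriv U₁ (Yinv U₁ u) with hp₁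
  set p₂ : ℝ → ℝ := fun u => deriv U₂ (Yinv U₂ u) with hp₂
  have hp₁cont : ContinuousOn p₁ (Ico uc 1) := S₁.p_continuousOn
  have hp₂cont : ContinuousOn p₂ (Ico uc 1) := S₂.p_continuousOn
  have hp₁neg : ∀ u ∈ Ico uc 1, p₁ u < 0 := fun u hu =>
    S₁.deriv_neg _ (S₁.Yinv_spec hu).1
  have hp₂neg : ∀ u ∈ Ico uc 1, p₂ u < 0 := fun u hu =>
    S₂.deriv_neg _ (S₂.Yinv_spec hu).1
  set c0 : ℝ := (v₁ * uc * (v₁ * uc) - v₂ * uc * (v₂ * uc)) / 2 with hc0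
  have hc0pos : 0 < c0 := by
    rw [hc0]
    have huc0 : 0 < uc := huc.1
    have ha1 : v₂ * uc < v₁ * uc := by nlinarith
    have ha2 : 0 < v₂ * uc := mul_pos hv₂pos huc0
    nlinarith
  set D : ℝ → ℝ := fun u => c0 - v₁ * (∫ w in uc..u, p₁ w) + v₂ * (∫ w in uc..u, p₂ w) with hD
  have hD_eq : ∀ u ∈ Ico uc 1, D u = p₁ u * p₁ u / 2 - p₂ u * p₂ u / 2 := by
    intro u hu
    have e₁ : p₁ u * p₁ u / 2 + Fint f uc u
        = v₁ * uc * (v₁ * uc) / 2 - v₁ * ∫ w in uc..u, p₁ w := S₁.energy hu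
    have e₂ : p₂ u * p₂ u / 2 + Fint f uc u
        = v₂ * uc * (v₂ * uc) / 2 - v₂ * ∫ w in uc..u, p₂ w := S₂.energy hu
    rw [hD, hc0]
    simp only []
    linarith
  have hD_uc : D uc = c0 := by rw [hD]; simp
  have hp₁at : ∀ u ∈ Ioo uc 1, ContinuousAt p₁ u := fun u hu =>
    S₁.contU'.continuousAt.comp (S₁.Yinv_continuousAt hu)
  have hp₂at : ∀ u ∈ Ioo uc 1, ContinuousAt p₂ u := fun u hu =>
    S₂.contU'.continuousAt.comp (S₂.Yinv_continuousAt hu)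
  have hprim : ∀ (p : ℝ → ℝ), ContinuousOn p (Ico uc 1) → ∀ u ∈ Ioo uc 1, ContinuousAt p u →
      HasDerivAt (fun x => ∫ w in uc..x, p w) (p u) u := by
    intro p hp u hu hpc
    have hint : IntervalIntegrable p volume uc u := by
      apply ContinuousOn.intervalIntegrable
      apply hp.mono
      rw [uIcc_of_le (le_of_lt hu.1)]
      intro x hx
      exact ⟨hx.1, lt_of_le_of_lt hx.2 hu.2⟩
    have hmeas : StronglyMeasurableAtFilter p (𝓝 u) volume :=
      ⟨Ioo uc 1, Ioo_mem_nhds hu.1 hu.2,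
        (hp.mono Ioo_subset_Ico_self).aestronglyMeasurable measurableSet_Ioo⟩
    exact intervalIntegral.integral_hasDerivAt_right hint hmeas hpc
  have hD_deriv : ∀ u ∈ Ioo uc 1, HasDerivAt D (-(v₁ * p₁ u) + v₂ * p₂ u) u := by
    intro u hu
    have h1 := HasDerivAt.const_mul v₁ (hprim p₁ hp₁cont u hu (hp₁at u hu))
    have h2 := HasDerivAt.const_mul v₂ (hprim p₂ hp₂cont u hu (hp₂at u hu))
    have h3 := ((hasDerivAt_const u c0).sub h1).add h2
    have h4 : 0 - v₁ * p₁ u + v₂ * p₂ u = -(v₁ * p₁ u) + v₂ * p₂ u := by ring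
    rw [h4] at h3
    exact h3
  have hD_contOn : ∀ b, uc ≤ b → b < 1 → ContinuousOn D (Icc uc b) := by
    intro b hucb hb1
    have hIccsub : Icc uc b ⊆ Ico uc 1 := fun x hx => ⟨hx.1, lt_of_le_of_lt hx.2 hb1⟩
    have hint1 : IntegrableOn p₁ (uIcc uc b) volume := by
      rw [uIcc_of_le hucb]
      exact (hp₁cont.mono hIccsub).integrableOn_compact isCompact_Icc
    have hint2 : IntegrableOn p₂ (uIcc uc b) volume := by
      rw [uIcc_of_le hucb]
      exact (hp₂cont.mono hIccsub).integrableOn_compact isCompact_Icc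
    have c1 : ContinuousOn (fun x => ∫ w in uc..x, p₁ w) (Icc uc b) := by
      have := intervalIntegral.continuousOn_primitive_interval hint1
      rwa [uIcc_of_le hucb] at this
    have c2 : ContinuousOn (fun x => ∫ w in uc..x, p₂ w) (Icc uc b) := by
      have := intervalIntegral.continuousOn_primitive_interval hint2
      rwa [uIcc_of_le hucb] at this
    exact (continuousOn_const.sub (continuousOn_const.mul c1)).add (continuousOn_const.mul c2)
  have claim : ∀ b, uc ≤ b → b < 1 → c0 ≤ D b := by
    intro b hucb hb1
    set T : Set ℝ := {w | w ∈ Icc uc b ∧ ∀ z ∈ Icc uc w, c0 ≤ D z} with hT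
    have hucT : uc ∈ T := by
      refine ⟨⟨le_rfl, hucb⟩, ?_⟩
      intro z hz
      have hz' : z = uc := le_antisymm hz.2 hz.1
      rw [hz', hD_uc]
    have hTbdd : BddAbove T := ⟨b, fun w hw => hw.1.2⟩
    set m := sSup T with hm
    have hucm : uc ≤ m := le_csSup hTbdd hucT
    have hmb : m ≤ b := csSup_le ⟨uc, hucT⟩ (fun w hw => hw.1.2)
    have hm1 : m < 1 := lt_of_le_of_lt hmb hb1
    have hbelow : ∀ z ∈ Ico uc m, c0 ≤ D z := by
      intro z hz
      obtain ⟨w, hwT, hzw⟩ := exists_lt_of_lt_csSup ⟨uc, hucT⟩ hz.2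
      exact hwT.2 z ⟨hz.1, le_of_lt hzw⟩
    have hDm : c0 ≤ D m := by
      rcases eq_or_lt_of_le hucm with h | h
      · rw [← h, hD_uc]
      · have hcw : ContinuousWithinAt D (Icc uc b) m :=
          (hD_contOn b hucb hb1) m ⟨hucm, hmb⟩
        have hne : (𝓝[Ioo uc m] m).NeBot := by
          rw [← mem_closure_iff_nhdsWithin_neBot, closure_Ioo (ne_of_lt h)]
          exact ⟨le_of_lt h, le_rfl⟩
        have htend : Tendsto D (𝓝[Ioo uc m] m) (𝓝 (D m)) :=
          hcw.tendsto.mono_left (nhdsWithin_mono m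
            (fun x hx => ⟨le_of_lt hx.1, le_trans (le_of_lt hx.2) hmb⟩))
        refine ge_of_tendsto htend ?_
        filter_upwards [self_mem_nhdsWithin] with z hz
        exact hbelow z ⟨le_of_lt hz.1, hz.2⟩
    rcases eq_or_lt_of_le hmb with h | hmb' 
    · rw [← h]; exact hDm
    exfalso
    have hDmpos : 0 < D m := lt_of_lt_of_le hc0pos hDm
    have hcw : ContinuousWithinAt D (Icc uc b) m := (hD_contOn b hucb hb1) m ⟨hucm, hmb⟩
    have hev : ∀ᶠ z in 𝓝[Icc uc b] m, 0 < D z :=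
      hcw.tendsto.eventually (eventually_gt_nhds hDmpos)
    obtain ⟨δ, hδpos, hδ⟩ := Metric.mem_nhdsWithin_iff.mp hev
    set b' := min b (m + δ / 2) with hb'
    have hmb'' : m < b' := lt_min hmb' (by linarith)
    have hb'b : b' ≤ b := min_le_left _ _
    have hb'1 : b' < 1 := lt_of_le_of_lt hb'b hb1
    have hsub : Icc m b' ⊆ Metric.ball m δ ∩ Icc uc b := by
      intro z hz
      constructor
      · rw [Metric.mem_ball, Real.dist_eq, abs_sub_lt_iff]
        have h2 : z ≤ m + δ / 2 := le_trans hz.2 (min_le_right _ _)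
        constructor <;> linarith [hz.1]
      · exact ⟨le_trans hucm hz.1, le_trans hz.2 hb'b⟩
    have hpos : ∀ z ∈ Icc m b', 0 < D z := fun z hz => hδ (hsub hz)
    have hmono : StrictMonoOn D (Icc m b') := by
      apply strictMonoOn_of_deriv_pos (convex_Icc m b')
      · exact (hD_contOn b hucb hb1).mono
          (fun z hz => ⟨le_trans hucm hz.1, le_trans hz.2 hb'b⟩)
      · intro z hz
        rw [interior_Icc] at hz
        have hzIoo : z ∈ Ioo uc 1 := ⟨lt_of_le_of_lt hucm hz.1, lt_trans hz.2 hb'1⟩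
        rw [(hD_deriv z hzIoo).deriv]
        have hDz : 0 < D z := hpos z ⟨le_of_lt hz.1, le_of_lt hz.2⟩
        have hzIco : z ∈ Ico uc 1 := Ioo_subset_Ico_self hzIoo
        have heq := hD_eq z hzIco
        have hp1 := hp₁neg z hzIco
        have hp2 := hp₂neg z hzIco
        rw [heq] at hDz
        have hsq : p₂ z * p₂ z < p₁ z * p₁ z := by linarith [hDz]
        have hsum : p₁ z + p₂ z < 0 := by linarith
        have hprod : 0 < (p₁ z - p₂ z) * (p₁ z + p₂ z) := by nlinarith [hsq]
        have hplt : p₁ z < p₂ z := by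
          by_contra hcon
          push_neg at hcon
          have h6 := mul_nonpos_of_nonneg_of_nonpos (sub_nonneg.mpr hcon) (le_of_lt hsum)
          linarith
        have hm1' : v₁ * p₁ z < v₂ * p₁ z := mul_lt_mul_of_neg_right hlt hp1
        have hm2' : v₂ * p₁ z < v₂ * p₂ z := mul_lt_mul_of_pos_left hplt hv₂pos
        linarith
    have hb'T : b' ∈ T := by
      refine ⟨⟨le_trans hucm (le_of_lt hmb''), hb'b⟩, ?_⟩
      intro z hz
      rcases le_or_gt z m with hzm | hzm
      · rcases eq_or_lt_of_le hzm with h | h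
        · rw [h]; exact hDm
        · exact hbelow z ⟨hz.1, h⟩
      · have : D m < D z := hmono ⟨le_rfl, le_of_lt hmb''⟩ ⟨le_of_lt hzm, hz.2⟩ hzm
        linarith
    have : b' ≤ m := le_csSup hTbdd hb'T
    linarith
  -- final contradiction : D → 0 near u = 1
  have hp₁lim : Tendsto p₁ (𝓝[<] (1:ℝ)) (𝓝 0) := S₁.deriv_tendsto.comp S₁.Yinv_tendsto
  have hp₂lim : Tendsto p₂ (𝓝[<] (1:ℝ)) (𝓝 0) := S₂.deriv_tendsto.comp S₂.Yinv_tendsto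
  have hDlim : Tendsto (fun u => p₁ u * p₁ u / 2 - p₂ u * p₂ u / 2) (𝓝[<] (1:ℝ)) (𝓝 0) := by
    have := ((hp₁lim.mul hp₁lim).div_const 2).sub ((hp₂lim.mul hp₂lim).div_const 2)
    simpa using this
  have hev : ∀ᶠ u in 𝓝[<] (1:ℝ), p₁ u * p₁ u / 2 - p₂ u * p₂ u / 2 < c0 :=
    hDlim.eventually (eventually_lt_nhds hc0pos)
  have hmem : ∀ᶠ u in 𝓝[<] (1:ℝ), u ∈ Ioo uc 1 := by
    filter_upwards [Ioo_mem_nhdsLT huc.2] with u hu using hu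
  obtain ⟨u, hu1, hu2⟩ := (hev.and hmem).exists
  have hclaim := claim u (le_of_lt hu2.1) hu2.2
  rw [hD_eq u (Ioo_subset_Ico_self hu2)] at hclaim
  linarith

end PTWAux

/-- Uniqueness of the propagation speed of permanent form travelling waves. -/
theorem ptw_speed_unique (f : ℝ → ℝ) (hf : IsKPP f) (uc : ℝ) (huc : uc ∈ Set.Ioo (0:ℝ) 1)
    (v₁ v₂ : ℝ) (hv₁ : 0 ≤ v₁) (hv₂ : 0 ≤ v₂) (U₁ U₂ : ℝ → ℝ)
    (h₁ : IsPTW f uc v₁ U₁) (h₂ : IsPTW f uc v₂ U₂) : v₁ = v₂ := by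
  rcases lt_trichotomy v₁ v₂ with h | h | h
  · exact absurd (PTWAux.speed_not_lt f hf uc huc hv₂ hv₁ h₂ h₁ h) id
  · exact h
  · exact absurd (PTWAux.speed_not_lt f hf uc huc hv₁ hv₂ h₁ h₂ h) id
end

section
/- For each fixed cut-off value u_c in (0,1), each KPP reaction function f, and each speed v ≥ 0, the profile of a permanent form travelling wave solution with cut-off u_c is unique: if U₁ and U₂ are both permanent form travelling wave solutions with cut-off u_c and the same speed v, then U₁(y) = U₂(y) for all y in ℝ. -/
open Real Filter Topology

private lemma diffAt_deriv {U : ℝ → ℝ} {y : ℝ} (h : ContDiffAt ℝ 2 U y) :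
    DifferentiableAt ℝ (deriv U) y := by
  obtain ⟨u, hu, hcd⟩ := h.contDiffOn le_rfl (by norm_num)
  obtain ⟨t, hts, hto, hyt⟩ := mem_nhds_iff.mp hu
  have h2 : ContDiffOn ℝ 2 U t := hcd.mono hts
  have h3 : ContDiffOn ℝ 1 (deriv U) t := h2.deriv_of_isOpen hto (by norm_num)
  exact ((h3.differentiableOn one_ne_zero) y hyt).differentiableAt (hto.mem_nhds hyt)

private lemma const_of_hasDerivAt_zero_Ioi {h : ℝ → ℝ}
    (hd : ∀ y ∈ Set.Ioi (0:ℝ), HasDerivAt h 0 y) :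
    ∀ y ∈ Set.Ioi (0:ℝ), h y = h 1 := by
  have key : ∀ a b : ℝ, 0 < a → a ≤ b → h b = h a := by
    intro a b ha hab
    exact constant_of_has_deriv_right_zero
      (fun x hx => (hd x (lt_of_lt_of_le ha hx.1)).continuousAt.continuousWithinAt)
      (fun x hx => (hd x (lt_of_lt_of_le ha hx.1)).hasDerivWithinAt) b ⟨hab, le_rfl⟩
  intro y hy
  rcases le_total y 1 with h1 | h1
  · exact (key y 1 hy h1).symm
  · exact key 1 y one_pos h1

private lemma right_side {f : ℝ → ℝ} {uc : ℝ} (huc : uc ∈ Set.Ioo (0:ℝ) 1)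
    {v : ℝ} (hv : 0 ≤ v) {U : ℝ → ℝ} (h : IsPTW f uc v U) :
    0 < v ∧ (∀ y, 0 ≤ y → U y = uc * Real.exp (-(v * y))) ∧ deriv U 0 = -(v * uc) := by
  obtain ⟨hC1, hC2, hode, h0, hleft, hright, hbot, htop⟩ := h
  have hUd : Differentiable ℝ U := hC1.differentiable one_ne_zero
  have hgc : Continuous (deriv U) := hC1.continuous_deriv le_rfl
  -- exp(vy) * U' is constant on (0,∞)
  have hode' : ∀ y ∈ Set.Ioi (0:ℝ), HasDerivAt (fun t => Real.exp (v*t) * deriv U t) 0 y := by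
    intro y hy
    have hy' : (0:ℝ) < y := hy
    have hexp : HasDerivAt (fun t : ℝ => Real.exp (v*t)) (Real.exp (v*y) * (v*1)) y :=
      ((hasDerivAt_id' y).const_mul v).exp
    have hg : HasDerivAt (deriv U) (deriv (deriv U) y) y :=
      (diffAt_deriv (hC2 y hy'.ne')).hasDerivAt
    have hmul := hexp.mul hg
    refine hmul.congr_deriv ?_
    have hcz : cutoff f uc (U y) = 0 := if_neg (not_lt.mpr (hright y hy').2)
    have hoy := hode y hy'.ne'
    rw [hcz, add_zero] at hoy
    have h2 : deriv (deriv U) y = -(v * deriv U y) := by linarith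
    rw [h2]; ring
  set c : ℝ := Real.exp (v*1) * deriv U 1 with hc_def
  have hconst : ∀ y, 0 < y → Real.exp (v*y) * deriv U y = c :=
    fun y hy => const_of_hasDerivAt_zero_Ioi hode' y hy
  have hgy : ∀ y, 0 < y → deriv U y = c * Real.exp (-(v*y)) := by
    intro y hy
    have h1 := hconst y hy
    rw [Real.exp_neg, mul_comm c, inv_mul_eq_div, eq_div_iff (Real.exp_ne_zero _)]
    linear_combination h1
  rcases eq_or_lt_of_le hv with hv0 | hv0
  · -- v = 0 : contradiction
    exfalso
    subst hv0
    have hU : ∀ y, 0 < y → U y = (U 1 - c) + c * y := by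
      intro y hy
      have hd : ∀ z ∈ Set.Ioi (0:ℝ), HasDerivAt (fun t => U t - c * t) 0 z := by
        intro z hz
        have hz' : (0:ℝ) < z := hz
        have := (hUd z).hasDerivAt.sub ((hasDerivAt_id' z).const_mul c)
        refine this.congr_deriv ?_
        rw [hgy z hz']
        simp
      have := const_of_hasDerivAt_zero_Ioi hd y hy
      linarith
    have hlin : Tendsto (fun y => (U 1 - c) + c * y) atTop (𝓝 0) := by
      apply htop.congr'
      filter_upwards [eventually_gt_atTop (0:ℝ)] with y hy using (hU y hy)
    rcases lt_trichotomy c 0 with hc | hc | hc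
    · have hb2 : Tendsto (fun y : ℝ => (U 1 - c) + c * y) atTop atBot :=
        tendsto_atBot_add_const_left _ _ (Tendsto.const_mul_atTop_of_neg hc tendsto_id)
      exact not_tendsto_nhds_of_tendsto_atBot hb2 0 hlin
    · have hU1 : U 1 = 0 := by
        have hconst2 : Tendsto (fun y : ℝ => (U 1 - c) + c * y) atTop (𝓝 (U 1)) := by
          have : (fun y : ℝ => (U 1 - c) + c * y) = fun _ => U 1 := by
            funext y; rw [hc]; ring
          rw [this]
          exact tendsto_const_nhds
        exact tendsto_nhds_unique hconst2 hlin
      have hzero : ∀ y, 0 < y → U y = 0 := by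
        intro y hy; rw [hU y hy, hU1, hc]; ring
      have ht1 : Tendsto U (𝓝[>](0:ℝ)) (𝓝 uc) := by
        have := (hUd.continuous.tendsto 0).mono_left (nhdsWithin_le_nhds (s := Set.Ioi (0:ℝ)))
        rwa [h0] at this
      have ht2 : Tendsto U (𝓝[>](0:ℝ)) (𝓝 0) := by
        apply tendsto_const_nhds.congr'
        filter_upwards [self_mem_nhdsWithin] with z hz using (hzero z hz).symm
      exact absurd (tendsto_nhds_unique ht1 ht2) (ne_of_gt huc.1)
    · have hb2 : Tendsto (fun y : ℝ => (U 1 - c) + c * y) atTop atTop :=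
        tendsto_atTop_add_const_left _ _ (Tendsto.const_mul_atTop hc tendsto_id)
      exact not_tendsto_nhds_of_tendsto_atTop hb2 0 hlin
  · -- v > 0
    have hvne : v ≠ 0 := hv0.ne'
    set A : ℝ := U 1 + (c/v) * Real.exp (-(v*1)) with hA_def
    have hUy : ∀ y, 0 < y → U y = A - (c/v) * Real.exp (-(v*y)) := by
      intro y hy
      have hd : ∀ z ∈ Set.Ioi (0:ℝ), HasDerivAt (fun t => U t + (c/v) * Real.exp (-(v*t))) 0 z := by
        intro z hz
        have hz' : (0:ℝ) < z := hz
        have hexp : HasDerivAt (fun t : ℝ => Real.exp (-(v*t))) (Real.exp (-(v*z)) * -(v*1)) z :=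
          (((hasDerivAt_id' z).const_mul v).neg).exp
        have := (hUd z).hasDerivAt.add (hexp.const_mul (c/v))
        refine this.congr_deriv ?_
        rw [hgy z hz']
        field_simp
        ring
      have := const_of_hasDerivAt_zero_Ioi hd y hy
      rw [hA_def]; linarith
    have hexp0 : Tendsto (fun y : ℝ => Real.exp (-(v*y))) atTop (𝓝 0) := by
      apply Real.tendsto_exp_atBot.comp
      exact tendsto_neg_atTop_atBot.comp (Tendsto.const_mul_atTop hv0 tendsto_id)
    have hlin : Tendsto (fun y => A - (c/v) * Real.exp (-(v*y))) atTop (𝓝 (A - (c/v) * 0)) :=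
      tendsto_const_nhds.sub (hexp0.const_mul (c/v))
    have hlin' : Tendsto U atTop (𝓝 (A - (c/v) * 0)) := by
      apply hlin.congr'
      filter_upwards [eventually_gt_atTop (0:ℝ)] with y hy using (hUy y hy).symm
    have hA0 : A = 0 := by
      have := tendsto_nhds_unique hlin' htop
      simpa using this
    -- limit at 0⁺ gives c = -(v*uc)
    have ht1 : Tendsto U (𝓝[>](0:ℝ)) (𝓝 uc) := by
      have := (hUd.continuous.tendsto 0).mono_left (nhdsWithin_le_nhds (s := Set.Ioi (0:ℝ)))
      rwa [h0] at this
    have ht2 : Tendsto U (𝓝[>](0:ℝ)) (𝓝 (A - (c/v) * Real.exp (-(v*0)))) := by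
      have hcont : Continuous (fun y : ℝ => A - (c/v) * Real.exp (-(v*y))) :=
        continuous_const.sub (continuous_const.mul
          (Real.continuous_exp.comp (continuous_const.mul continuous_id).neg))
      apply ((hcont.tendsto 0).mono_left (nhdsWithin_le_nhds (s := Set.Ioi (0:ℝ)))).congr'
      filter_upwards [self_mem_nhdsWithin] with z hz using (hUy z hz).symm
    have hcuc : c = -(v * uc) := by
      have := tendsto_nhds_unique ht1 ht2
      rw [hA0] at this
      simp at this
      field_simp at this
      linarith
    refine ⟨hv0, ?_, ?_⟩
    · intro y hy
      rcases eq_or_lt_of_le hy with rfl | hy'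
      · simp [h0]
      · rw [hUy y hy', hA0, hcuc]
        field_simp
        ring
    · have hg1 : Tendsto (deriv U) (𝓝[>](0:ℝ)) (𝓝 (deriv U 0)) :=
        (hgc.tendsto 0).mono_left (nhdsWithin_le_nhds (s := Set.Ioi (0:ℝ)))
      have hg2 : Tendsto (deriv U) (𝓝[>](0:ℝ)) (𝓝 (c * Real.exp (-(v*0)))) := by
        have hcont : Continuous (fun y : ℝ => c * Real.exp (-(v*y))) :=
          continuous_const.mul
            (Real.continuous_exp.comp (continuous_const.mul continuous_id).neg)
        apply ((hcont.tendsto 0).mono_left (nhdsWithin_le_nhds (s := Set.Ioi (0:ℝ)))).congr'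
        filter_upwards [self_mem_nhdsWithin] with z hz using (hgy z hz).symm
      have := tendsto_nhds_unique hg1 hg2
      rw [this, hcuc]
      simp

private lemma gt_uc_on_neg {f : ℝ → ℝ} (hf : IsKPP f) {uc : ℝ} (huc : uc ∈ Set.Ioo (0:ℝ) 1)
    {v : ℝ} (hv0 : 0 < v) {U : ℝ → ℝ} (h : IsPTW f uc v U)
    (hd0 : deriv U 0 = -(v * uc)) : ∀ y, y < 0 → uc < U y := by
  obtain ⟨hC1, hC2, hode, h0, hleft, hright, hbot, htop⟩ := h
  have hUd : Differentiable ℝ U := hC1.differentiable one_ne_zero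
  have hgc : Continuous (deriv U) := hC1.continuous_deriv le_rfl
  intro y0 hy0
  by_contra hcon
  have hUy0 : U y0 = uc := le_antisymm (not_lt.mp hcon) (hleft y0 hy0).1
  -- derivative vanishes at the interior minimum y0
  have hdy0 : deriv U y0 = 0 := by
    have hmin : IsLocalMin U y0 := by
      filter_upwards [isOpen_Iio.mem_nhds hy0] with z hz
      rw [hUy0]; exact (hleft z hz).1
    exact hmin.deriv_eq_zero
  -- the function exp(v y) * U' is antitone on [y0, 0]
  have hder : ∀ x ∈ Set.Ioo y0 0, HasDerivAt (fun t => Real.exp (v*t) * deriv U t)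
      (-(Real.exp (v*x) * cutoff f uc (U x))) x := by
    intro x hx
    have hexp : HasDerivAt (fun t : ℝ => Real.exp (v*t)) (Real.exp (v*x) * (v*1)) x :=
      ((hasDerivAt_id' x).const_mul v).exp
    have hg : HasDerivAt (deriv U) (deriv (deriv U) x) x :=
      (diffAt_deriv (hC2 x hx.2.ne)).hasDerivAt
    have hmul := hexp.mul hg
    refine hmul.congr_deriv ?_
    have hox := hode x hx.2.ne
    have h2 : deriv (deriv U) x = -(v * deriv U x) - cutoff f uc (U x) := by linarith
    rw [h2]; ring
  have hmono : AntitoneOn (fun t => Real.exp (v*t) * deriv U t) (Set.Icc y0 0) := by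
    apply antitoneOn_of_deriv_nonpos (convex_Icc _ _)
    · exact ((Real.continuous_exp.comp (continuous_const.mul continuous_id)).mul hgc).continuousOn
    · intro x hx
      rw [interior_Icc] at hx
      exact (hder x hx).differentiableAt.differentiableWithinAt
    · intro x hx
      rw [interior_Icc] at hx
      rw [(hder x hx).deriv]
      have hcut : 0 ≤ cutoff f uc (U x) := by
        unfold cutoff
        split
        · rename_i hlt
          rcases lt_or_eq_of_le (hleft x hx.2).2 with h1 | h1
          · exact (hf.2.2.2.2.2.1 (U x) (lt_trans huc.1 hlt) h1).1.le
          · rw [h1, hf.2.2.1]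
        · exact le_rfl
      have := Real.exp_pos (v*x)
      nlinarith
  -- hence U' ≤ 0 on [y0, 0], so U is antitone there, so U ≡ uc on [y0, 0)
  have hgle : ∀ x ∈ Set.Icc y0 0, deriv U x ≤ 0 := by
    intro x hx
    have h1 : Real.exp (v*x) * deriv U x ≤ Real.exp (v*y0) * deriv U y0 :=
      hmono ⟨le_rfl, hy0.le⟩ hx hx.1
    rw [hdy0, mul_zero] at h1
    nlinarith [Real.exp_pos (v*x)]
  have hmonoU : AntitoneOn U (Set.Icc y0 0) := by
    apply antitoneOn_of_deriv_nonpos (convex_Icc _ _) hUd.continuous.continuousOn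
      (fun x _ => (hUd x).differentiableWithinAt)
    intro x hx
    rw [interior_Icc] at hx
    exact hgle x (Set.Ioo_subset_Icc_self hx)
  have hUeq : ∀ z ∈ Set.Ioo y0 0, U z = uc := by
    intro z hz
    have h1 : U z ≤ uc := by
      have := hmonoU ⟨le_rfl, hy0.le⟩ ⟨hz.1.le, hz.2.le⟩ hz.1.le
      rwa [hUy0] at this
    exact le_antisymm h1 (hleft z hz.2).1
  -- therefore U' = 0 on (y0, 0), hence U'(0) = 0, contradiction
  have hgz : ∀ z ∈ Set.Ioo y0 0, deriv U z = 0 := by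
    intro z hz
    have hev : U =ᶠ[𝓝 z] fun _ => uc := by
      filter_upwards [isOpen_Ioo.mem_nhds hz] with w hw using hUeq w hw
    exact ((hasDerivAt_const z uc).congr_of_eventuallyEq hev).deriv
  have t1 : Tendsto (deriv U) (𝓝[<](0:ℝ)) (𝓝 (deriv U 0)) :=
    (hgc.tendsto 0).mono_left nhdsWithin_le_nhds
  have t2 : Tendsto (deriv U) (𝓝[<](0:ℝ)) (𝓝 0) := by
    apply tendsto_const_nhds.congr'
    filter_upwards [Ioo_mem_nhdsLT hy0] with z hz
      using (hgz z hz).symm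
  have : deriv U 0 = 0 := tendsto_nhds_unique t1 t2
  rw [hd0] at this
  nlinarith [huc.1]

private lemma exists_lip {f : ℝ → ℝ} (hf : ContDiff ℝ 1 f) :
    ∃ (F : ℝ → ℝ) (Kf : NNReal), LipschitzWith Kf F ∧ ∀ u ∈ Set.Icc (0:ℝ) 1, F u = f u := by
  obtain ⟨C, hC⟩ := (isCompact_Icc (a := (0:ℝ)) (b := 1)).exists_bound_of_continuousOn
      ((hf.continuous_deriv le_rfl).continuousOn)
  have hlipf : LipschitzOnWith (Real.toNNReal C) f (Set.Icc 0 1) := by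
    apply Convex.lipschitzOnWith_of_nnnorm_deriv_le (fun x _ => (hf.differentiable one_ne_zero) x)
      (fun x hx => ?_) (convex_Icc 0 1)
    rw [← NNReal.coe_le_coe, coe_nnnorm, Real.coe_toNNReal']
    exact le_max_of_le_left (hC x hx)
  refine ⟨fun u => f (min (max u 0) 1), Real.toNNReal C, ?_, fun u hu => by
    simp only [max_eq_left hu.1, min_eq_left hu.2]⟩
  apply LipschitzWith.of_dist_le_mul
  intro u w
  have h1 : dist (f (min (max u 0) 1)) (f (min (max w 0) 1)) ≤
      Real.toNNReal C * dist (min (max u 0) 1) (min (max w 0) 1) :=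
    hlipf.dist_le_mul _ ⟨le_min (le_max_right _ _) zero_le_one, min_le_right _ _⟩
      _ ⟨le_min (le_max_right _ _) zero_le_one, min_le_right _ _⟩
  refine h1.trans (mul_le_mul_of_nonneg_left ?_ (Real.toNNReal C).coe_nonneg)
  rw [Real.dist_eq, Real.dist_eq]
  calc |min (max u 0) 1 - min (max w 0) 1| ≤ max |max u 0 - max w 0| |(1:ℝ)-1| :=
        abs_min_sub_min_le_max _ _ _ _
    _ = |max u 0 - max w 0| := by simp
    _ ≤ |u - w| := abs_max_sub_max_le_abs _ _ _

private lemma lipY {F : ℝ → ℝ} {Kf : NNReal} (hF : LipschitzWith Kf F) {v : ℝ} (hv : 0 ≤ v) :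
    LipschitzWith (1 + (Real.toNNReal v + Kf))
      (fun p : ℝ × ℝ => ((p.2, -(v * p.2) - F p.1) : ℝ × ℝ)) := by
  apply LipschitzWith.of_dist_le_mul
  intro p q
  have hK : ((1 + (Real.toNNReal v + Kf) : NNReal) : ℝ) = 1 + (v + (Kf : ℝ)) := by
    push_cast [Real.coe_toNNReal v hv]; ring
  rw [hK, Prod.dist_eq]
  have hd1 : dist p.1 q.1 ≤ dist p q := by rw [Prod.dist_eq]; exact le_max_left _ _
  have hd2 : dist p.2 q.2 ≤ dist p q := by rw [Prod.dist_eq]; exact le_max_right _ _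
  have hdnn : (0:ℝ) ≤ dist p q := dist_nonneg
  apply max_le
  · nlinarith [Kf.coe_nonneg]
  · have hFd : dist (F p.1) (F q.1) ≤ (Kf : ℝ) * dist p.1 q.1 := hF.dist_le_mul _ _
    have : dist (-(v * p.2) - F p.1) (-(v * q.2) - F q.1) ≤ v * dist p.2 q.2 + (Kf:ℝ) * dist p.1 q.1 := by
      simp only [Real.dist_eq] at *
      have h1 : |(-(v * p.2) - F p.1) - (-(v * q.2) - F q.1)| ≤ |v * (q.2 - p.2)| + |F q.1 - F p.1| := by
        have := abs_add_le (v * (q.2 - p.2)) (F q.1 - F p.1)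
        calc |(-(v * p.2) - F p.1) - (-(v * q.2) - F q.1)| = |v * (q.2 - p.2) + (F q.1 - F p.1)| := by ring_nf
          _ ≤ _ := this
      rw [abs_mul, abs_of_nonneg hv, abs_sub_comm q.2 p.2] at h1
      rw [abs_sub_comm (F q.1) (F p.1)] at h1
      linarith
    nlinarith [Kf.coe_nonneg]

/-- Uniqueness of the profile of permanent form travelling waves at a fixed speed. -/
theorem ptw_profile_unique (f : ℝ → ℝ) (hf : IsKPP f) (uc : ℝ) (huc : uc ∈ Set.Ioo (0:ℝ) 1)
    (v : ℝ) (hv : 0 ≤ v) (U₁ U₂ : ℝ → ℝ)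
    (h₁ : IsPTW f uc v U₁) (h₂ : IsPTW f uc v U₂) : ∀ y : ℝ, U₁ y = U₂ y := by
  obtain ⟨hv0, hform₁, hder₁⟩ := right_side huc hv h₁
  obtain ⟨-, hform₂, hder₂⟩ := right_side huc hv h₂
  have hpos₁ : ∀ z, z < 0 → uc < U₁ z := gt_uc_on_neg hf huc hv0 h₁ hder₁
  have hpos₂ : ∀ z, z < 0 → uc < U₂ z := gt_uc_on_neg hf huc hv0 h₂ hder₂
  obtain ⟨F, Kf, hFlip, hFeq⟩ := exists_lip hf.1
  set Y : ℝ × ℝ → ℝ × ℝ := fun p => (p.2, -(v * p.2) - F p.1) with hYdef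
  have hYlip : LipschitzWith (1 + (Real.toNNReal v + Kf)) Y := lipY hFlip hv
  have key : ∀ U : ℝ → ℝ, IsPTW f uc v U → deriv U 0 = -(v*uc) → (∀ z, z < 0 → uc < U z) →
      ∀ t, t ≤ 0 → HasDerivWithinAt (fun s => ((U s, deriv U s) : ℝ × ℝ))
        (Y (U t, deriv U t)) (Set.Iic t) t := by
    intro U hU hd hpos t ht
    obtain ⟨hC1, hC2, hode, h0, hleft, hright, hbot, htop⟩ := hU
    have hUd : Differentiable ℝ U := hC1.differentiable one_ne_zero
    have hgc : Continuous (deriv U) := hC1.continuous_deriv le_rfl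
    rcases lt_or_eq_of_le ht with ht' | ht'
    · have h1 : HasDerivAt U (deriv U t) t := (hUd t).hasDerivAt
      have h2 : HasDerivAt (deriv U) (deriv (deriv U) t) t :=
        (diffAt_deriv (hC2 t (ne_of_lt ht'))).hasDerivAt
      have heq : Y (U t, deriv U t) = (deriv U t, deriv (deriv U) t) := by
        have hot := hode t (ne_of_lt ht')
        simp only [cutoff] at hot
        rw [if_pos (hpos t ht')] at hot
        have hFU : F (U t) = f (U t) :=
          hFeq _ ⟨le_trans huc.1.le (hpos t ht').le, (hleft t ht').2⟩
        simp only [hYdef]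
        refine Prod.ext rfl ?_
        simp only
        rw [hFU]; linarith
      rw [heq]
      exact (h1.prodMk h2).hasDerivWithinAt
    · subst ht'
      have hcont2 : ContinuousWithinAt (deriv U) (Set.Iio 0) 0 := hgc.continuousAt.continuousWithinAt
      have hdiffL : DifferentiableOn ℝ (deriv U) (Set.Iio 0) :=
        fun z hz => (diffAt_deriv (hC2 z (ne_of_lt hz))).differentiableWithinAt
      have hlim : Tendsto (fun x => deriv (deriv U) x) (𝓝[<](0:ℝ))
          (𝓝 (-(v * deriv U 0) - f (U 0))) := by
        have hcf : Continuous fun x => -(v * deriv U x) - f (U x) :=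
          (continuous_const.mul hgc).neg.sub (hf.1.continuous.comp hUd.continuous)
        apply ((hcf.tendsto 0).mono_left nhdsWithin_le_nhds).congr'
        filter_upwards [self_mem_nhdsWithin] with z hz
        have hot := hode z (ne_of_lt hz)
        simp only [cutoff] at hot
        rw [if_pos (hpos z hz)] at hot
        linarith
      have h2 : HasDerivWithinAt (deriv U) (-(v * deriv U 0) - f (U 0)) (Set.Iic 0) 0 :=
        hasDerivWithinAt_Iic_of_tendsto_deriv hdiffL hcont2 self_mem_nhdsWithin hlim
      have h1 : HasDerivWithinAt U (deriv U 0) (Set.Iic 0) 0 := (hUd 0).hasDerivAt.hasDerivWithinAt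
      have heq : Y (U 0, deriv U 0) = ((deriv U 0, -(v * deriv U 0) - f (U 0)) : ℝ × ℝ) := by
        simp only [hYdef]
        refine Prod.ext rfl ?_
        simp only
        rw [h0, hFeq uc ⟨huc.1.le, huc.2.le⟩]
      rw [heq]
      exact h1.prodMk h2
  intro y
  rcases lt_trichotomy y 0 with hy | rfl | hy
  · have hb : ((U₁ 0, deriv U₁ 0) : ℝ × ℝ) = (U₂ 0, deriv U₂ 0) := by
      rw [h₁.2.2.2.1, h₂.2.2.2.1, hder₁, hder₂]
    have heq := ODE_solution_unique_of_mem_Icc_left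
      (v := fun _ : ℝ => Y) (s := fun _ : ℝ => (Set.univ : Set (ℝ × ℝ)))
      (f := fun s => ((U₁ s, deriv U₁ s) : ℝ × ℝ)) (g := fun s => ((U₂ s, deriv U₂ s) : ℝ × ℝ))
      (a := y) (b := 0)
      (fun _ _ => hYlip.lipschitzOnWith)
      ((h₁.1.continuous.prodMk (h₁.1.continuous_deriv le_rfl)).continuousOn)
      (fun t ht => key U₁ h₁ hder₁ hpos₁ t ht.2)
      (fun _ _ => trivial)
      ((h₂.1.continuous.prodMk (h₂.1.continuous_deriv le_rfl)).continuousOn)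
      (fun t ht => key U₂ h₂ hder₂ hpos₂ t ht.2)
      (fun _ _ => trivial)
      hb
    have := heq (Set.left_mem_Icc.mpr hy.le)
    exact congrArg Prod.fst this
  · rw [h₁.2.2.2.1, h₂.2.2.2.1]
  · rw [hform₁ y hy.le, hform₂ y hy.le]
end

section
/- For each fixed cut-off value u_c in (0,1) and each KPP reaction function f, the unique propagation speed v*(u_c) of the permanent form travelling wave solution with cut-off u_c satisfies 0 < v*(u_c) < 2, where 2 is the minimum propagation speed of permanent form travelling waves in the absence of cut-off. -/
open Real Filter Topology

/-- If `F` is continuous on `[0,∞)` and has zero derivative on `(0,∞)`, it is constant there. -/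
lemma const_right (F : ℝ → ℝ) (hFc : ContinuousOn F (Set.Ici 0))
    (hd : ∀ y : ℝ, 0 < y → HasDerivAt F 0 y) : ∀ y : ℝ, 0 ≤ y → F y = F 0 := by
  intro y hy
  rcases hy.eq_or_lt with h | h
  · rw [← h]
  have key : ∀ ε : ℝ, 0 < ε → ε ≤ y → F y = F ε := by
    intro ε hε hεy
    have := constant_of_has_deriv_right_zero (f := F) (a := ε) (b := y)
      (hFc.mono (by intro x hx; exact le_trans hε.le hx.1))
      (fun x hx => (hd x (lt_of_lt_of_le hε hx.1)).hasDerivWithinAt)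
    exact this y ⟨hεy, le_refl y⟩
  have h1 : Tendsto F (𝓝[>] (0:ℝ)) (𝓝 (F 0)) :=
    ((hFc 0 (by simp)).mono (Set.Ioi_subset_Ici le_rfl)).tendsto
  have h2 : Tendsto F (𝓝[>] (0:ℝ)) (𝓝 (F y)) := by
    have hev : ∀ᶠ ε in 𝓝[>] (0:ℝ), F ε = F y := by
      filter_upwards [Ioo_mem_nhdsGT_of_mem (Set.mem_Ico.mpr ⟨le_rfl, h⟩)] with ε hε
      exact (key ε hε.1 hε.2.le).symm
    exact tendsto_const_nhds.congr' (by filter_upwards [hev] with e he using he.symm)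
  exact tendsto_nhds_unique h2 h1

/-- The unique propagation speed satisfies `0 < v* < 2`. -/
theorem ptw_speed_bounds (f : ℝ → ℝ) (hf : IsKPP f) (uc : ℝ) (huc : uc ∈ Set.Ioo (0:ℝ) 1)
    (v : ℝ) (hv : 0 ≤ v) (U : ℝ → ℝ) (hU : IsPTW f uc v U) : 0 < v ∧ v < 2 := by
  obtain ⟨fC1, f0, f1, df0, df1, fmid, fbig⟩ := hf
  obtain ⟨hC1, hC2, hODE, hU0, hleft, hright, hbot, htop⟩ := hU
  obtain ⟨huc0, huc1⟩ := huc
  have hUcont : Continuous U := hC1.continuous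
  have hU'cont : Continuous (deriv U) := hC1.continuous_deriv le_rfl
  have hUd : ∀ y : ℝ, HasDerivAt U (deriv U y) y :=
    fun y => (hC1.differentiable one_ne_zero y).hasDerivAt
  have hU'' : ∀ y : ℝ, y ≠ 0 → HasDerivAt (deriv U) (deriv (deriv U) y) y := by
    intro y hy
    obtain ⟨s, hs, hcd⟩ := (hC2 y hy).contDiffOn le_rfl (by simp)
    obtain ⟨t, hts, hto, hyt⟩ := mem_nhds_iff.1 hs
    have h1 : ContDiffOn ℝ 1 (deriv U) t :=
      (hcd.mono hts).deriv_of_isOpen hto (by norm_num)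
    exact ((h1.differentiableOn one_ne_zero).differentiableAt (hto.mem_nhds hyt)).hasDerivAt
  have hcut0 : ∀ y : ℝ, 0 < y → cutoff f uc (U y) = 0 :=
    fun y hy => if_neg (not_lt.2 (hright y hy).2)
  have hUnn : ∀ y : ℝ, 0 ≤ U y := by
    intro y
    rcases lt_trichotomy y 0 with h | h | h
    · linarith [(hleft y h).1]
    · rw [h, hU0]; linarith
    · exact (hright y h).1
  have hUle1 : ∀ y : ℝ, U y ≤ 1 := by
    intro y
    rcases lt_trichotomy y 0 with h | h | h
    · exact (hleft y h).2
    · rw [h, hU0]; linarith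
    · linarith [(hright y h).2]
  have hcut_le : ∀ y : ℝ, cutoff f uc (U y) ≤ U y := by
    intro y
    unfold cutoff
    split_ifs with h
    · rcases (hUle1 y).eq_or_lt with h1 | h1
      · rw [h1, f1]; linarith
      · exact (fmid (U y) (lt_trans huc0 h) h1).2
    · exact hUnn y
  -- the function e^{vy} U'(y) is constant on [0,∞)
  have hF1 : ∀ y : ℝ, 0 ≤ y → Real.exp (v * y) * deriv U y = deriv U 0 := by
    have := const_right (fun y => Real.exp (v * y) * deriv U y)
      (((Real.continuous_exp.comp (continuous_const.mul continuous_id)).mul hU'cont).continuousOn)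
      (by
        intro y hy
        have hexp : HasDerivAt (fun t : ℝ => Real.exp (v * t)) (Real.exp (v * y) * v) y := by
          simpa using ((hasDerivAt_id y).const_mul v).exp
        have hmul := hexp.mul (hU'' y hy.ne')
        refine hmul.congr_deriv ?_
        have h := hODE y hy.ne'
        rw [hcut0 y hy] at h
        linear_combination (Real.exp (v * y)) * h)
    intro y hy
    simpa using this y hy
  -- v > 0
  have hvpos : 0 < v := by
    rcases hv.eq_or_lt with hv0 | hv0
    · exfalso
      subst hv0
      have hder : ∀ y : ℝ, 0 ≤ y → deriv U y = deriv U 0 := by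
        intro y hy; have := hF1 y hy; simpa using this
      set c := deriv U 0 with hc
      have hlin : ∀ y : ℝ, 0 ≤ y → U y - c * y = uc := by
        have := const_right (fun y => U y - c * y)
          ((hUcont.sub (continuous_const.mul continuous_id)).continuousOn)
          (by
            intro y hy
            have := (hUd y).sub ((hasDerivAt_id y).const_mul c)
            refine this.congr_deriv ?_
            rw [hder y hy.le]; ring)
        intro y hy
        have h2 := this y hy
        simpa [hU0] using h2
      rcases lt_trichotomy c 0 with hc0 | hc0 | hc0
      · have hy : (0:ℝ) < (uc + 1) / (-c) := div_pos (by linarith) (by linarith)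
        have := hlin _ hy.le
        have h2 := (hright _ hy).1
        have : U ((uc + 1) / (-c)) = uc + c * ((uc + 1) / (-c)) := by linarith
        rw [this] at h2
        have hcne : c ≠ 0 := ne_of_lt hc0
        have : c * ((uc + 1) / (-c)) = -(uc + 1) := by
          rw [mul_div_assoc']
          rw [div_eq_iff (neg_ne_zero.mpr hcne)]
          ring
        rw [this] at h2; linarith
      · have huceq : uc = 0 := by
          have hev : ∀ᶠ y in atTop, U y = uc := by
            filter_upwards [eventually_ge_atTop (0:ℝ)] with y hy
            have := hlin y hy; rw [hc0] at this; linarith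
          have : Tendsto U atTop (𝓝 uc) :=
            tendsto_const_nhds.congr' (by filter_upwards [hev] with y hy using hy.symm)
          exact (tendsto_nhds_unique htop this).symm
        linarith
      · have := hlin 1 zero_le_one
        have h2 := (hright 1 one_pos).2
        nlinarith
    · exact hv0
  -- U'(0) = -v uc
  have hcval : deriv U 0 = -(v * uc) := by
    set c := deriv U 0 with hc
    have hder : ∀ y : ℝ, 0 ≤ y → deriv U y = c * Real.exp (-(v * y)) := by
      intro y hy
      have h1 := hF1 y hy
      have h2 : Real.exp (v * y) ≠ 0 := (Real.exp_pos _).ne'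
      rw [Real.exp_neg]
      field_simp
      linarith [h1]
    have hconst : ∀ y : ℝ, 0 ≤ y → U y + c / v * Real.exp (-(v * y)) = uc + c / v := by
      have := const_right (fun y => U y + c / v * Real.exp (-(v * y)))
        ((hUcont.add (continuous_const.mul
          (Real.continuous_exp.comp (continuous_const.mul continuous_id).neg))).continuousOn)
        (by
          intro y hy
          have hexp : HasDerivAt (fun t : ℝ => Real.exp (-(v * t))) (Real.exp (-(v * y)) * (-v)) y := by
            simpa using (((hasDerivAt_id y).const_mul v).neg).exp
          have := (hUd y).add (hexp.const_mul (c / v))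
          refine this.congr_deriv ?_
          rw [hder y hy.le]
          field_simp
          ring)
      intro y hy
      have h2 := this y hy
      simpa [hU0] using h2
    have hlim : Tendsto (fun y => U y + c / v * Real.exp (-(v * y))) atTop (𝓝 0) := by
      have h1 : Tendsto (fun y : ℝ => Real.exp (-(v * y))) atTop (𝓝 0) := by
        apply Real.tendsto_exp_atBot.comp
        exact tendsto_neg_atTop_atBot.comp (tendsto_id.const_mul_atTop hvpos)
      have := htop.add ((h1.const_mul (c / v)))
      simpa using this
    have hev : Tendsto (fun y => U y + c / v * Real.exp (-(v * y))) atTop (𝓝 (uc + c / v)) := by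
      apply tendsto_const_nhds.congr'
      filter_upwards [eventually_ge_atTop (0:ℝ)] with y hy
      exact (hconst y hy).symm
    have h0 : uc + c / v = 0 := tendsto_nhds_unique hev hlim
    have : c / v = -uc := by linarith
    field_simp at this
    linarith
  refine ⟨hvpos, ?_⟩
  -- v < 2
  by_contra h2'
  push_neg at h2'
  set g : ℝ → ℝ := fun t => Real.exp (v / 2 * t) * U t with hgdef
  set g1 : ℝ → ℝ := fun t => Real.exp (v / 2 * t) * (v / 2 * U t + deriv U t) with hg1def
  have hg : ∀ y : ℝ, HasDerivAt g (g1 y) y := by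
    intro y
    have hexp : HasDerivAt (fun t : ℝ => Real.exp (v / 2 * t)) (Real.exp (v / 2 * y) * (v / 2)) y := by
      simpa using ((hasDerivAt_id y).const_mul (v / 2)).exp
    have := hexp.mul (hUd y)
    refine this.congr_deriv ?_
    simp only [hg1def]; ring
  have hg1cont : Continuous g1 :=
    (Real.continuous_exp.comp (continuous_const.mul continuous_id)).mul
      ((continuous_const.mul hUcont).add hU'cont)
  have hg1d : ∀ y : ℝ, y ≠ 0 → HasDerivAt g1
      (Real.exp (v / 2 * y) * (v / 2) * (v / 2 * U y + deriv U y)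
        + Real.exp (v / 2 * y) * (v / 2 * deriv U y + deriv (deriv U) y)) y := by
    intro y hy
    have hexp : HasDerivAt (fun t : ℝ => Real.exp (v / 2 * t)) (Real.exp (v / 2 * y) * (v / 2)) y := by
      simpa using ((hasDerivAt_id y).const_mul (v / 2)).exp
    exact hexp.mul (((hUd y).const_mul (v / 2)).add (hU'' y hy))
  have hg2nn : ∀ y : ℝ, y ≠ 0 →
      0 ≤ Real.exp (v / 2 * y) * (v / 2) * (v / 2 * U y + deriv U y)
        + Real.exp (v / 2 * y) * (v / 2 * deriv U y + deriv (deriv U) y) := by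
    intro y hy
    have hODEy := hODE y hy
    have hval : Real.exp (v / 2 * y) * (v / 2) * (v / 2 * U y + deriv U y)
        + Real.exp (v / 2 * y) * (v / 2 * deriv U y + deriv (deriv U) y)
        = Real.exp (v / 2 * y) * ((v / 2) ^ 2 * U y - cutoff f uc (U y)) := by
      linear_combination Real.exp (v / 2 * y) * hODEy
    rw [hval]
    apply mul_nonneg (Real.exp_pos _).le
    have h1 : U y ≤ (v / 2) ^ 2 * U y := by
      have key : 0 ≤ U y * ((v / 2) ^ 2 - 1) := mul_nonneg (hUnn y) (by nlinarith)
      nlinarith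
    linarith [hcut_le y]
  have hmono : MonotoneOn g1 (Set.Iic 0) := by
    apply monotoneOn_of_deriv_nonneg (convex_Iic 0) hg1cont.continuousOn
    · intro x hx
      rw [interior_Iic] at hx
      exact ((hg1d x hx.ne).differentiableAt).differentiableWithinAt
    · intro x hx
      rw [interior_Iic] at hx
      rw [(hg1d x hx.ne).deriv]
      exact hg2nn x hx.ne
  have hg10 : g1 0 = -(v / 2 * uc) := by
    simp only [hg1def, mul_zero, Real.exp_zero, one_mul, hU0, hcval]
    ring
  have hg10neg : g1 0 < 0 := by rw [hg10]; nlinarith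
  set m := g1 0 with hm
  have hgc : Continuous g :=
    (Real.continuous_exp.comp (continuous_const.mul continuous_id)).mul hUcont
  have hanti : AntitoneOn (fun t => g t - m * t) (Set.Iic 0) := by
    apply antitoneOn_of_deriv_nonpos (convex_Iic 0)
    · exact (hgc.sub (continuous_const.mul continuous_id)).continuousOn
    · intro x hx
      rw [interior_Iic] at hx
      have hmid : HasDerivAt (fun t : ℝ => m * t) m x := by
        simpa using (hasDerivAt_id x).const_mul m
      exact ((hg x).sub hmid).differentiableAt.differentiableWithinAt
    · intro x hx
      rw [interior_Iic] at hx
      have hmid : HasDerivAt (fun t : ℝ => m * t) m x := by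
        simpa using (hasDerivAt_id x).const_mul m
      have hsd : HasDerivAt (fun t => g t - m * t) (g1 x - m) x := (hg x).sub hmid
      rw [hsd.deriv]
      have := hmono (Set.mem_Iic.mpr hx.le) (Set.mem_Iic.mpr le_rfl) hx.le
      linarith
  set y0 : ℝ := 2 / v * Real.log uc - 1 with hy0def
  have hL : Real.log uc < 0 := Real.log_neg huc0 huc1
  have h2v : (0:ℝ) < 2 / v := by positivity
  have hy0neg : y0 < 0 := by
    have : 2 / v * Real.log uc < 0 := mul_neg_of_pos_of_neg h2v hL
    rw [hy0def]; linarith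
  have h1 : g 0 - m * 0 ≤ g y0 - m * y0 :=
    hanti (Set.mem_Iic.mpr hy0neg.le) (Set.mem_Iic.mpr le_rfl) hy0neg.le
  have hg0 : g 0 = uc := by simp [hgdef, hU0]
  have hmy0 : 0 < m * y0 := mul_pos_of_neg_of_neg hg10neg hy0neg
  have hlow : uc + m * y0 ≤ g y0 := by
    rw [hg0] at h1; linarith
  have hup : g y0 ≤ Real.exp (v / 2 * y0) := by
    have := Real.exp_pos (v / 2 * y0)
    have := hUle1 y0
    simp only [hgdef]
    nlinarith
  have hveq : v / 2 * y0 = Real.log uc - v / 2 := by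
    rw [hy0def]
    field_simp
  have hexplt : Real.exp (v / 2 * y0) < uc := by
    calc Real.exp (v / 2 * y0) < Real.exp (Real.log uc) := by
          apply Real.exp_lt_exp.mpr
          rw [hveq]; linarith
      _ = uc := Real.exp_log huc0
  linarith
end

section
/- For each KPP reaction function f, the propagation speed function v* : (0,1) → ℝ⁺ is strictly monotone decreasing: if 0 < a < b < 1 then v*(a) > v*(b). -/
open Real Filter Topology

open Set

lemma cutoff_of_gt {f : ℝ → ℝ} {c u : ℝ} (h : c < u) : cutoff f c u = f u := if_pos h
lemma cutoff_of_le {f : ℝ → ℝ} {c u : ℝ} (h : u ≤ c) : cutoff f c u = 0 := if_neg (not_lt.2 h)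

lemma hasDerivAt_deriv_of_contDiffAt2 {U : ℝ → ℝ} {y : ℝ} (h : ContDiffAt ℝ 2 U y) :
    HasDerivAt (deriv U) (deriv (deriv U) y) y := by
  obtain ⟨s, hs, hcd⟩ := h.contDiffOn le_rfl (by simp)
  obtain ⟨t, hts, hto, hyt⟩ := mem_nhds_iff.mp hs
  have h1 : ContDiffOn ℝ 1 (deriv U) t := (hcd.mono hts).deriv_of_isOpen hto (by norm_num)
  have h2 : DifferentiableAt ℝ (deriv U) y := by
    have := (h1.differentiableOn one_ne_zero) y hyt
    exact this.differentiableAt (hto.mem_nhds hyt)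
  exact h2.hasDerivAt

lemma const_of_derivZero {F : ℝ → ℝ} {x y : ℝ} (hxy : x ≤ y)
    (hc : ContinuousOn F (Icc x y)) (hd : ∀ t ∈ Ioo x y, HasDerivAt F 0 t) :
    F y = F x := by
  have hdiff : DifferentiableOn ℝ F (interior (Icc x y)) := by
    rw [interior_Icc]; exact fun t ht => (hd t ht).differentiableAt.differentiableWithinAt
  have h0 : ∀ t ∈ interior (Icc x y), deriv F t = 0 := by
    rw [interior_Icc]; exact fun t ht => (hd t ht).deriv
  have hmono := monotoneOn_of_deriv_nonneg (convex_Icc x y) hc hdiff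
    (fun t ht => (h0 t ht).ge)
  have hanti := antitoneOn_of_deriv_nonpos (convex_Icc x y) hc hdiff
    (fun t ht => (h0 t ht).le)
  exact le_antisymm (hanti (left_mem_Icc.2 hxy) (right_mem_Icc.2 hxy) hxy)
    (hmono (left_mem_Icc.2 hxy) (right_mem_Icc.2 hxy) hxy)

lemma wave_speed {f : ℝ → ℝ} {c v : ℝ} {U : ℝ → ℝ}
    (hc0 : 0 < c) (hv : 0 ≤ v) (hU : IsPTW f c v U) :
    0 < v ∧ deriv U 0 = -(v * c) := by
  obtain ⟨hC1, hC2, hODE, hU0, hlef, hrig, hbot, htop⟩ := hU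
  have Wcont : Continuous (deriv U) := hC1.continuous_deriv le_rfl
  have hUd : ∀ y, HasDerivAt U (deriv U y) y := fun y => ((hC1.differentiable one_ne_zero) y).hasDerivAt
  have hright : ∀ y : ℝ, 0 < y → HasDerivAt (deriv U) (-(v * deriv U y)) y := by
    intro y hy
    have h := hasDerivAt_deriv_of_contDiffAt2 (hC2 y (ne_of_gt hy))
    have he := hODE y (ne_of_gt hy)
    rw [cutoff_of_le (hrig y hy).2] at he
    have : deriv (deriv U) y = -(v * deriv U y) := by linarith
    rwa [this] at h
  have hWexp : ∀ y : ℝ, 0 ≤ y → deriv U y = deriv U 0 * Real.exp (-(v*y)) := by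
    intro y hy
    have hg := const_of_derivZero hy
      (F := fun t => deriv U t * Real.exp (v*t))
      ((Wcont.mul (Real.continuous_exp.comp (continuous_const.mul continuous_id))).continuousOn)
      (by
        intro t ht
        have h1 := hright t ht.1
        have h2 : HasDerivAt (fun t => Real.exp (v*t)) (Real.exp (v*t) * v) t := by
          exact ((Real.hasDerivAt_exp (v*t)).comp t ((hasDerivAt_id t).const_mul v)).congr_deriv (by ring)
        have h3 := h1.mul h2
        have he : -(v * deriv U t) * Real.exp (v*t) + deriv U t * (Real.exp (v*t) * v) = 0 := by
          ring
        rwa [he] at h3)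
    simp only [mul_zero, Real.exp_zero, mul_one] at hg
    rw [Real.exp_neg]
    field_simp
    linarith [hg]
  rcases eq_or_lt_of_le hv with hv0 | hvpos
  · exfalso
    have hWc : ∀ y : ℝ, 0 ≤ y → deriv U y = deriv U 0 := by
      intro y hy; rw [hWexp y hy, ← hv0]; simp
    have hUy : ∀ y : ℝ, 0 ≤ y → U y = c + deriv U 0 * y := by
      intro y hy
      have hg := const_of_derivZero hy
        (F := fun t => U t - (c + deriv U 0 * t))
        ((hC1.continuous.sub (continuous_const.add (continuous_const.mul continuous_id))).continuousOn)
        (by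
          intro t ht
          have h1 := (hUd t).sub ((hasDerivAt_id t).const_mul (deriv U 0) |>.const_add c)
          rw [hWc t ht.1.le] at h1
          exact h1.congr_deriv (by ring))
      simp only [hU0, mul_zero, add_zero, sub_self] at hg
      linarith [hg]
    rcases lt_trichotomy (deriv U 0) 0 with h | h | h
    · set y := (c+1)/(-(deriv U 0)) with hy
      have hypos : 0 < y := div_pos (by linarith) (by linarith)
      have h1 := (hrig y hypos).1
      rw [hUy y hypos.le] at h1
      have hne : deriv U 0 ≠ 0 := ne_of_lt h
      have h2 : deriv U 0 * y = -(c+1) := by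
        rw [hy]
        rw [mul_div_assoc', mul_comm, ← mul_div_assoc', div_neg, div_self hne]
        ring
      rw [h2] at h1; linarith
    · have hlim : Tendsto U atTop (𝓝 c) := by
        apply Tendsto.congr' _ (tendsto_const_nhds (α := ℝ) (x := c))
        filter_upwards [eventually_ge_atTop (0:ℝ)] with y hy
        rw [hUy y hy, h]; ring
      have := tendsto_nhds_unique htop hlim
      linarith
    · have h1 := (hrig 1 one_pos).2
      rw [hUy 1 zero_le_one] at h1; nlinarith
  · refine ⟨hvpos, ?_⟩
    set W0 := deriv U 0 with hW0
    have hVd : ∀ y, HasDerivAt (fun t => (c + W0/v) - (W0/v) * Real.exp (-(v*t)))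
        (W0 * Real.exp (-(v*y))) y := by
      intro y
      have h2 : HasDerivAt (fun t : ℝ => Real.exp (-(v*t))) (Real.exp (-(v*y)) * (-v)) y := by
        refine ((Real.hasDerivAt_exp (-(v*y))).comp y
          (((hasDerivAt_id y).const_mul v).neg)).congr_deriv ?_
        ring
      have h3 := ((h2.const_mul (W0/v)).const_sub (c + W0/v))
      have he : -(W0/v * (Real.exp (-(v*y)) * (-v))) = W0 * Real.exp (-(v*y)) := by
        field_simp
      rwa [he] at h3
    have hUV : ∀ y : ℝ, 0 ≤ y → U y = (c + W0/v) - (W0/v) * Real.exp (-(v*y)) := by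
      intro y hy
      have hg := const_of_derivZero hy
        (F := fun t => U t - ((c + W0/v) - (W0/v) * Real.exp (-(v*t))))
        ((hC1.continuous.sub (continuous_const.sub (continuous_const.mul (Real.continuous_exp.comp ((continuous_const.mul continuous_id).neg))))).continuousOn)
        (by
          intro t ht
          have h1 := (hUd t).sub (hVd t)
          rw [hWexp t ht.1.le] at h1
          exact h1.congr_deriv (by ring))
      simp only [mul_zero, neg_zero, Real.exp_zero, mul_one, hU0] at hg
      have : c - (c + W0/v - W0/v) = 0 := by ring
      rw [this] at hg
      linarith [hg]
    have hexplim : Tendsto (fun y : ℝ => Real.exp (-(v*y))) atTop (𝓝 0) := by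
      apply Real.tendsto_exp_atBot.comp
      have : Tendsto (fun y : ℝ => v * y) atTop atTop :=
        Tendsto.const_mul_atTop hvpos tendsto_id
      exact tendsto_neg_atBot_iff.mpr this
    have hVlim : Tendsto (fun y : ℝ => (c + W0/v) - (W0/v) * Real.exp (-(v*y))) atTop
        (𝓝 (c + W0/v)) := by
      have := (tendsto_const_nhds (x := (c + W0/v)) (α := ℝ)).sub
        ((tendsto_const_nhds (x := W0/v) (α := ℝ)).mul hexplim)
      simpa using this
    have hlim : Tendsto U atTop (𝓝 (c + W0/v)) := by
      apply hVlim.congr'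
      filter_upwards [eventually_ge_atTop (0:ℝ)] with y hy
      exact (hUV y hy).symm
    have h0 := tendsto_nhds_unique htop hlim
    have hvne : v ≠ 0 := ne_of_gt hvpos
    field_simp at h0
    linarith

lemma cutoff_nonneg {f : ℝ → ℝ} {c : ℝ} (hf : IsKPP f) (hc0 : 0 < c) {u : ℝ} (hu : u ≤ 1) :
    0 ≤ cutoff f c u := by
  by_cases h : c < u
  · rw [cutoff_of_gt h]
    rcases eq_or_lt_of_le hu with rfl | hlt
    · rw [hf.2.2.1]
    · exact (hf.2.2.2.2.2.1 u (lt_trans hc0 h) hlt).1.le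
  · rw [cutoff_of_le (not_lt.1 h)]

lemma wave_W_neg {f : ℝ → ℝ} {c v : ℝ} {U : ℝ → ℝ}
    (hf : IsKPP f) (hc0 : 0 < c) (hc1 : c < 1) (hv : 0 ≤ v) (hU : IsPTW f c v U) :
    ∀ y ≤ 0, deriv U y < 0 := by
  obtain ⟨hvpos, hW0⟩ := wave_speed hc0 hv hU
  obtain ⟨hC1, hC2, hODE, hU0, hlef, hrig, hbot, htop⟩ := hU
  have Wcont : Continuous (deriv U) := hC1.continuous_deriv le_rfl
  have hUd : ∀ y, HasDerivAt U (deriv U y) y := fun y => ((hC1.differentiable one_ne_zero) y).hasDerivAt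
  have hODEg : ∀ y, y ≠ 0 → HasDerivAt (deriv U) (-(v * deriv U y) - cutoff f c (U y)) y := by
    intro y hy
    have h := hasDerivAt_deriv_of_contDiffAt2 (hC2 y hy)
    have he := hODE y hy
    have : deriv (deriv U) y = -(v * deriv U y) - cutoff f c (U y) := by linarith
    rwa [this] at h
  have hW0neg : deriv U 0 < 0 := by
    rw [hW0]; have := mul_pos hvpos hc0; linarith
  by_contra hcon
  push_neg at hcon
  obtain ⟨yb, hyb, hWyb⟩ := hcon
  set S := {y : ℝ | y ≤ 0 ∧ 0 ≤ deriv U y} with hS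
  have hSne : S.Nonempty := ⟨yb, hyb, hWyb⟩
  have hSc : IsClosed S := by
    have : S = Iic 0 ∩ deriv U ⁻¹' (Ici 0) := Set.ext fun y => Iff.rfl
    rw [this]; exact isClosed_Iic.inter (isClosed_Ici.preimage Wcont)
  have hSbdd : BddAbove S := ⟨0, fun y hy => hy.1⟩
  set y₀ := sSup S with hy₀def
  have hy₀S : y₀ ∈ S := hSc.csSup_mem hSne hSbdd
  have hy₀le : y₀ ≤ 0 := hy₀S.1
  have hy₀ : y₀ < 0 := by
    rcases eq_or_lt_of_le hy₀le with h | h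
    · exfalso; rw [h] at hy₀S; linarith [hy₀S.2]
    · exact h
  have hWneg : ∀ y, y₀ < y → y ≤ 0 → deriv U y < 0 := by
    intro y h1 h2; by_contra h3; push_neg at h3
    exact absurd (le_csSup hSbdd ⟨h2, h3⟩) (not_le.2 h1)
  have hWy₀0 : deriv U y₀ = 0 := by
    refine le_antisymm ?_ hy₀S.2
    have hev : ∀ᶠ y in 𝓝[>] y₀, deriv U y ≤ 0 := by
      filter_upwards [Ioo_mem_nhdsGT_of_mem (⟨le_refl y₀, hy₀⟩ : y₀ ∈ Ico y₀ 0)] with y hy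
      exact (hWneg y hy.1 hy.2.le).le
    exact le_of_tendsto (Wcont.continuousAt.tendsto.mono_left nhdsWithin_le_nhds) hev
  have hUdec : StrictAntiOn U (Icc y₀ 0) := by
    apply strictAntiOn_of_deriv_neg (convex_Icc _ _) hC1.continuous.continuousOn
    intro t ht; rw [interior_Icc] at ht; exact hWneg t ht.1 ht.2.le
  have hUy₀c : c < U y₀ := by
    have := hUdec (left_mem_Icc.2 hy₀le) (right_mem_Icc.2 hy₀le) hy₀
    rwa [hU0] at this
  have hUy₀1 : U y₀ ≤ 1 := (hlef y₀ hy₀).2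
  rcases eq_or_lt_of_le hUy₀1 with hU1 | hUlt
  · -- U y₀ = 1 : Gronwall-type argument
    have hUgtc : ∀ y ∈ Ioo y₀ 0, c < U y := by
      intro y hy
      have := hUdec ⟨hy.1.le, hy.2.le⟩ (right_mem_Icc.2 hy₀le) hy.2
      rwa [hU0] at this
    have hWle : ∀ y ∈ Icc y₀ 0, deriv U y ≤ 0 := by
      intro y hy
      rcases eq_or_lt_of_le hy.1 with h | h
      · rw [← h, hWy₀0]
      · exact (hWneg y h hy.2).le
    have hUc : ∀ y ∈ Icc y₀ 0, c ≤ U y := by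
      intro y hy
      rcases eq_or_lt_of_le hy.2 with h | h
      · rw [h, hU0]
      · exact (hlef y h).1
    have hUle1 : ∀ y ∈ Icc y₀ 0, U y ≤ 1 := by
      intro y hy
      rcases eq_or_lt_of_le hy.2 with h | h
      · rw [h, hU0]; linarith
      · exact (hlef y h).2
    obtain ⟨M, hM⟩ := isCompact_Icc.exists_bound_of_continuousOn
      (s := Icc c 1) ((hf.1.continuous_deriv le_rfl).continuousOn)
    set K := |M| + 1 with hK
    have hKpos : 0 < K := by positivity
    have hfb : ∀ u ∈ Icc c 1, f u ≤ K * (1 - u) := by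
      intro u hu
      have h1 : ‖f u - f 1‖ ≤ K * ‖u - 1‖ := by
        apply Convex.norm_image_sub_le_of_norm_deriv_le
          (fun x _ => (hf.1.differentiable one_ne_zero).differentiableAt)
          (fun x hx => le_trans (hM x hx) (by simp [hK]; linarith [le_abs_self M]))
          (convex_Icc _ _) (right_mem_Icc.2 (by linarith)) hu
      rw [hf.2.2.1, sub_zero, Real.norm_eq_abs, Real.norm_eq_abs] at h1
      have h2 : |u - 1| = 1 - u := by rw [abs_of_nonpos (by linarith [hu.2])]; ring
      rw [h2] at h1
      exact le_trans (le_abs_self _) h1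
    set s := Real.sqrt K with hs
    have hspos : 0 < s := Real.sqrt_pos.2 hKpos
    have hD : ∀ y ∈ Icc y₀ 0, (deriv U y)^2 ≤ K * (1 - U y)^2 := by
      have hanti : AntitoneOn (fun y => (deriv U y)^2 - K * (1 - U y)^2) (Icc y₀ 0) := by
        apply antitoneOn_of_deriv_nonpos (convex_Icc _ _)
        · exact ((Wcont.pow 2).sub (continuous_const.mul
            ((continuous_const.sub hC1.continuous).pow 2))).continuousOn
        · intro t ht; rw [interior_Icc] at ht
          have htne : t ≠ 0 := ne_of_lt ht.2
          exact (((hODEg t htne).pow 2).sub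
            ((((hUd t).const_sub 1).pow 2).const_mul K)).differentiableAt.differentiableWithinAt
        · intro t ht; rw [interior_Icc] at ht
          have htne : t ≠ 0 := ne_of_lt ht.2
          have hDt := ((hODEg t htne).pow 2).sub ((((hUd t).const_sub 1).pow 2).const_mul K)
          rw [show deriv (fun y => deriv U y ^ 2 - K * (1 - U y) ^ 2) t = _ from hDt.deriv]
          have h1 : deriv U t < 0 := hWneg t ht.1 ht.2.le
          have h2 : cutoff f c (U t) = f (U t) := cutoff_of_gt (hUgtc t ht)
          have h3 : f (U t) ≤ K * (1 - U t) :=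
            hfb (U t) ⟨hUc t ⟨ht.1.le, ht.2.le⟩, hUle1 t ⟨ht.1.le, ht.2.le⟩⟩
          have h4 : (0:ℝ) ≤ 1 - U t := by linarith [hUle1 t (⟨ht.1.le, ht.2.le⟩ : t ∈ Icc y₀ 0)]
          rw [h2]
          have h5 : (0:ℝ) ≤ v * (deriv U t)^2 := by positivity
          norm_num
          nlinarith [mul_le_mul_of_nonneg_left h3 (by linarith : (0:ℝ) ≤ -(2 * deriv U t))]
      intro y hy
      have h6' := hanti (left_mem_Icc.2 hy₀le) hy hy.1
      have h6 : deriv U y ^ 2 - K * (1 - U y) ^ 2 ≤ deriv U y₀ ^ 2 - K * (1 - U y₀) ^ 2 := h6'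
      rw [hWy₀0, hU1] at h6
      norm_num at h6
      linarith
    have hWb : ∀ y ∈ Icc y₀ 0, -(deriv U y) ≤ s * (1 - U y) := by
      intro y hy
      have h1 := hD y hy
      have h2 : -(deriv U y) = Real.sqrt ((deriv U y)^2) := by
        rw [Real.sqrt_sq_eq_abs, abs_of_nonpos (hWle y hy)]
      rw [h2]
      calc Real.sqrt ((deriv U y)^2) ≤ Real.sqrt (K * (1 - U y)^2) := Real.sqrt_le_sqrt h1
        _ = s * (1 - U y) := by
            rw [Real.sqrt_mul hKpos.le, Real.sqrt_sq_eq_abs,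
              abs_of_nonneg (by linarith [hUle1 y hy])]
    have hρ : AntitoneOn (fun y => (1 - U y) * Real.exp (-(s*y))) (Icc y₀ 0) := by
      apply antitoneOn_of_deriv_nonpos (convex_Icc _ _)
      · exact ((continuous_const.sub hC1.continuous).mul
          (Real.continuous_exp.comp ((continuous_const.mul continuous_id).neg))).continuousOn
      · intro t ht; rw [interior_Icc] at ht
        have hE : HasDerivAt (fun y : ℝ => Real.exp (-(s*y))) (Real.exp (-(s*t)) * (-s)) t := by
          refine ((Real.hasDerivAt_exp (-(s*t))).comp t (((hasDerivAt_id t).const_mul s).neg)).congr_deriv ?_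
          ring
        exact (((hUd t).const_sub 1).mul hE).differentiableAt.differentiableWithinAt
      · intro t ht; rw [interior_Icc] at ht
        have hE : HasDerivAt (fun y : ℝ => Real.exp (-(s*y))) (Real.exp (-(s*t)) * (-s)) t := by
          refine ((Real.hasDerivAt_exp (-(s*t))).comp t (((hasDerivAt_id t).const_mul s).neg)).congr_deriv ?_
          ring
        have hDt := ((hUd t).const_sub 1).mul hE
        rw [show deriv (fun y => (1 - U y) * Real.exp (-(s*y))) t = _ from hDt.deriv]
        have h1 := hWb t ⟨ht.1.le, ht.2.le⟩
        have h2 : (0:ℝ) < Real.exp (-(s*t)) := Real.exp_pos _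
        have : -(deriv U t) * Real.exp (-(s*t)) + (1 - U t) * (Real.exp (-(s*t)) * (-s))
            = Real.exp (-(s*t)) * (-(deriv U t) - s * (1 - U t)) := by ring
        rw [this]
        have h3 : -(deriv U t) - s * (1 - U t) ≤ 0 := by linarith
        exact mul_nonpos_of_nonneg_of_nonpos h2.le h3
    have hfinal' := hρ (left_mem_Icc.2 hy₀le) (right_mem_Icc.2 hy₀le) hy₀le
    have hfinal : (1 - U 0) * Real.exp (-(s*0)) ≤ (1 - U y₀) * Real.exp (-(s*y₀)) := hfinal'
    rw [hU0, hU1] at hfinal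
    norm_num at hfinal
    linarith
  · -- U y₀ < 1
    have hfpos : 0 < f (U y₀) := (hf.2.2.2.2.2.1 (U y₀) (lt_trans hc0 hUy₀c) hUlt).1
    have hdW : HasDerivAt (deriv U) (-(f (U y₀))) y₀ := by
      have h := hODEg y₀ (ne_of_lt hy₀)
      rw [hWy₀0, cutoff_of_gt hUy₀c] at h
      simpa using h
    have hslope : ∀ᶠ y in 𝓝[<] y₀, 0 < deriv U y := by
      have hev : ∀ᶠ y in 𝓝[≠] y₀, slope (deriv U) y₀ y < 0 :=
        (hasDerivAt_iff_tendsto_slope.1 hdW).eventually_lt_const (by linarith)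
      have hev' := hev.filter_mono (nhdsWithin_mono y₀ (fun x hx => ne_of_lt hx))
      filter_upwards [hev', self_mem_nhdsWithin] with y h1 h2
      rw [slope_def_field, hWy₀0, sub_zero] at h1
      have h3 : y - y₀ < 0 := sub_neg.2 h2
      by_contra h4; push_neg at h4
      have h5 : 0 ≤ deriv U y / (y - y₀) := by
        rw [div_nonneg_iff]; right; exact ⟨h4, h3.le⟩
      linarith
    obtain ⟨l, hl, hlsub⟩ := mem_nhdsLT_iff_exists_Ioo_subset.1 hslope
    set y₂ := (l + y₀)/2 with hy₂def
    have hly₀ : l < y₀ := hl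
    have hy₂l : l < y₂ := by rw [hy₂def]; linarith
    have hy₂y₀ : y₂ < y₀ := by rw [hy₂def]; linarith
    have hy₂pos : ∀ y, y₂ ≤ y → y < y₀ → 0 < deriv U y := fun y h1 h2 =>
      hlsub ⟨lt_of_lt_of_le hy₂l h1, h2⟩
    set T := {y : ℝ | y ≤ y₂ ∧ deriv U y ≤ 0} with hT
    by_cases hTne : T.Nonempty
    · have hTc : IsClosed T := by
        have : T = Iic y₂ ∩ deriv U ⁻¹' (Iic 0) := Set.ext fun y => Iff.rfl
        rw [this]; exact isClosed_Iic.inter (isClosed_Iic.preimage Wcont)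
      have hTbdd : BddAbove T := ⟨y₂, fun y hy => hy.1⟩
      set y₁ := sSup T with hy₁def
      have hy₁T : y₁ ∈ T := hTc.csSup_mem hTne hTbdd
      have hy₁y₂ : y₁ ≤ y₂ := hy₁T.1
      have hy₁y₀ : y₁ < y₀ := lt_of_le_of_lt hy₁y₂ hy₂y₀
      have hWpos : ∀ y, y₁ < y → y < y₀ → 0 < deriv U y := by
        intro y h1 h2
        rcases le_or_gt y y₂ with h3 | h3
        · by_contra h4; push_neg at h4
          exact absurd (le_csSup hTbdd ⟨h3, h4⟩) (not_le.2 h1)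
        · exact hy₂pos y h3.le h2
      have hWy₁ : deriv U y₁ = 0 := by
        refine le_antisymm hy₁T.2 ?_
        have hev : ∀ᶠ y in 𝓝[>] y₁, 0 ≤ deriv U y := by
          filter_upwards [Ioo_mem_nhdsGT_of_mem (⟨le_refl y₁, hy₁y₀⟩ : y₁ ∈ Ico y₁ y₀)] with y hy
          exact (hWpos y hy.1 hy.2).le
        exact ge_of_tendsto (Wcont.continuousAt.tendsto.mono_left nhdsWithin_le_nhds) hev
      have hz : StrictAntiOn (fun y => (deriv U y)^2) (Icc y₁ y₀) := by
        apply strictAntiOn_of_deriv_neg (convex_Icc _ _) (Wcont.pow 2).continuousOn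
        intro t ht; rw [interior_Icc] at ht
        have htpos := hWpos t ht.1 ht.2
        have htneg : t < 0 := lt_trans ht.2 hy₀
        have htne : t ≠ 0 := ne_of_lt htneg
        rw [((hODEg t htne).pow 2).deriv]
        have hcut : 0 ≤ cutoff f c (U t) := cutoff_nonneg hf hc0 (hlef t htneg).2
        have h5 : 0 < v * (deriv U t)^2 := by positivity
        norm_num
        nlinarith [mul_nonneg hcut htpos.le]
      have h1' := hz (left_mem_Icc.2 hy₁y₀.le) (right_mem_Icc.2 hy₁y₀.le) hy₁y₀
      have h1 : deriv U y₀ ^ 2 < deriv U y₁ ^ 2 := h1'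
      rw [hWy₁, hWy₀0] at h1
      norm_num at h1
    · have hTpos : ∀ y, y ≤ y₂ → 0 < deriv U y := by
        intro y hy; by_contra h; push_neg at h
        exact hTne ⟨y, hy, h⟩
      have hallpos : ∀ y, y < y₀ → 0 < deriv U y := by
        intro y hy
        rcases le_or_gt y y₂ with h | h
        · exact hTpos y h
        · exact hy₂pos y h.le hy
      have hmonoU : StrictMonoOn U (Iic y₀) := by
        apply strictMonoOn_of_deriv_pos (convex_Iic _) hC1.continuous.continuousOn
        intro t ht; rw [interior_Iic] at ht; exact hallpos t ht
      have h1 : U (y₀ - 1) < U y₀ :=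
        hmonoU (mem_Iic.2 (by linarith)) (mem_Iic.2 le_rfl) (by linarith)
      have h2 : ∀ y, y ≤ y₀ - 1 → U y ≤ U (y₀ - 1) := fun y hy =>
        hmonoU.monotoneOn (mem_Iic.2 (by linarith)) (mem_Iic.2 (by linarith)) hy
      have h3 : (1:ℝ) ≤ U (y₀ - 1) := by
        apply le_of_tendsto hbot
        filter_upwards [eventually_le_atBot (y₀ - 1)] with y hy
        exact h2 y hy
      linarith

lemma wave_more {f : ℝ → ℝ} {c v : ℝ} {U : ℝ → ℝ}
    (hf : IsKPP f) (hc0 : 0 < c) (hc1 : c < 1) (hv : 0 ≤ v) (hU : IsPTW f c v U) :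
    (∀ y < 0, c < U y ∧ U y < 1) ∧ (∀ y < 0, -(deriv U y) < v * U y) := by
  have hWneg := wave_W_neg hf hc0 hc1 hv hU
  obtain ⟨hvpos, hW0⟩ := wave_speed hc0 hv hU
  obtain ⟨hC1, hC2, hODE, hU0, hlef, hrig, hbot, htop⟩ := hU
  have Wcont : Continuous (deriv U) := hC1.continuous_deriv le_rfl
  have hUd : ∀ y, HasDerivAt U (deriv U y) y := fun y => ((hC1.differentiable one_ne_zero) y).hasDerivAt
  have hODEg : ∀ y, y ≠ 0 → HasDerivAt (deriv U) (-(v * deriv U y) - cutoff f c (U y)) y := by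
    intro y hy
    have h := hasDerivAt_deriv_of_contDiffAt2 (hC2 y hy)
    have he := hODE y hy
    have : deriv (deriv U) y = -(v * deriv U y) - cutoff f c (U y) := by linarith
    rwa [this] at h
  have hUanti : StrictAntiOn U (Iic 0) := by
    apply strictAntiOn_of_deriv_neg (convex_Iic 0) hC1.continuous.continuousOn
    intro t ht; rw [interior_Iic] at ht; exact hWneg t ht.le
  have hrange : ∀ y < 0, c < U y ∧ U y < 1 := by
    intro y hy
    constructor
    · have := hUanti (mem_Iic.2 hy.le) (mem_Iic.2 le_rfl) hy
      rwa [hU0] at this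
    · rcases eq_or_lt_of_le (hlef y hy).2 with h1 | h1
      · exfalso
        have h2 : U (y - 1) ≤ 1 := (hlef (y-1) (by linarith)).2
        have h3 : U y < U (y - 1) := hUanti (mem_Iic.2 (by linarith)) (mem_Iic.2 hy.le) (by linarith)
        rw [h1] at h3; linarith
      · exact h1
  refine ⟨hrange, ?_⟩
  intro y hy
  have hphi : StrictMonoOn (fun t => -(deriv U t) - v * U t) (Iic 0) := by
    apply strictMonoOn_of_deriv_pos (convex_Iic 0)
    · exact (Wcont.neg.sub (continuous_const.mul hC1.continuous)).continuousOn
    · intro t ht; rw [interior_Iic] at ht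
      have htne : t ≠ 0 := ne_of_lt ht
      have hD := ((hODEg t htne).neg).sub ((hUd t).const_mul v)
      rw [show deriv (fun t => -(deriv U t) - v * U t) t = _ from hD.deriv]
      have h2 : cutoff f c (U t) = f (U t) := cutoff_of_gt (hrange t ht).1
      have h3 : 0 < f (U t) := (hf.2.2.2.2.2.1 _ (lt_trans hc0 (hrange t ht).1) (hrange t ht).2).1
      rw [h2]
      linarith
  have h4' := hphi (mem_Iic.2 hy.le) (mem_Iic.2 le_rfl) hy
  have h4 : -(deriv U y) - v * U y < -(deriv U 0) - v * U 0 := h4'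
  rw [hU0, hW0] at h4
  linarith

set_option maxHeartbeats 2000000 in
/-- The propagation speed function is strictly monotone decreasing on `(0,1)`. -/
theorem vstar_strictAnti (f : ℝ → ℝ) (hf : IsKPP f) (vstar : ℝ → ℝ)
    (hvstar : ∀ uc ∈ Set.Ioo (0:ℝ) 1, 0 ≤ vstar uc ∧ ∃ U : ℝ → ℝ, IsPTW f uc (vstar uc) U)
    (a b : ℝ) (ha : 0 < a) (hab : a < b) (hb : b < 1) : vstar b < vstar a := by
  obtain ⟨hva0, Ua, hUa⟩ := hvstar a ⟨ha, lt_trans hab hb⟩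
  obtain ⟨hvb0, Ub, hUb⟩ := hvstar b ⟨lt_trans ha hab, hb⟩
  set va := vstar a with hva
  set vb := vstar b with hvb
  by_contra hcon
  push_neg at hcon
  -- hcon : va ≤ vb
  obtain ⟨hvapos, hWa0⟩ := wave_speed ha hva0 hUa
  obtain ⟨hvbpos, hWb0⟩ := wave_speed (lt_trans ha hab) hvb0 hUb
  have hWa := wave_W_neg hf ha (lt_trans hab hb) hva0 hUa
  have hWb := wave_W_neg hf (lt_trans ha hab) hb hvb0 hUb
  obtain ⟨hrangea, hphia⟩ := wave_more hf ha (lt_trans hab hb) hva0 hUa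
  obtain ⟨hrangeb, hphib⟩ := wave_more hf (lt_trans ha hab) hb hvb0 hUb
  obtain ⟨hC1a, hC2a, hODEa, hUa0, hlefa, hriga, hbota, htopa⟩ := hUa
  obtain ⟨hC1b, hC2b, hODEb, hUb0, hlefb, hrigb, hbotb, htopb⟩ := hUb
  have Wacont : Continuous (deriv Ua) := hC1a.continuous_deriv le_rfl
  have Wbcont : Continuous (deriv Ub) := hC1b.continuous_deriv le_rfl
  have hUad : ∀ y, HasDerivAt Ua (deriv Ua y) y :=
    fun y => ((hC1a.differentiable one_ne_zero) y).hasDerivAt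
  have hUbd : ∀ y, HasDerivAt Ub (deriv Ub y) y :=
    fun y => ((hC1b.differentiable one_ne_zero) y).hasDerivAt
  have hODEga : ∀ y, y ≠ 0 →
      HasDerivAt (deriv Ua) (-(va * deriv Ua y) - cutoff f a (Ua y)) y := by
    intro y hy
    have h := hasDerivAt_deriv_of_contDiffAt2 (hC2a y hy)
    have he := hODEa y hy
    have : deriv (deriv Ua) y = -(va * deriv Ua y) - cutoff f a (Ua y) := by linarith
    rwa [this] at h
  have hODEgb : ∀ y, y ≠ 0 →
      HasDerivAt (deriv Ub) (-(vb * deriv Ub y) - cutoff f b (Ub y)) y := by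
    intro y hy
    have h := hasDerivAt_deriv_of_contDiffAt2 (hC2b y hy)
    have he := hODEb y hy
    have : deriv (deriv Ub) y = -(vb * deriv Ub y) - cutoff f b (Ub y) := by linarith
    rwa [this] at h
  have hUaanti : StrictAntiOn Ua (Iic 0) := by
    apply strictAntiOn_of_deriv_neg (convex_Iic 0) hC1a.continuous.continuousOn
    intro t ht; rw [interior_Iic] at ht; exact hWa t ht.le
  -- inverse of Ua on (-∞,0]
  have hexists : ∀ u, a ≤ u → u < 1 → ∃ y ∈ Iic (0:ℝ), Ua y = u := by
    intro u h1 h2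
    have hev : ∀ᶠ y in atBot, u < Ua y := hbota.eventually_const_lt h2
    obtain ⟨y', hy'⟩ := (hev.and (eventually_le_atBot (0:ℝ))).exists
    have hivt := intermediate_value_Icc' hy'.2 hC1a.continuous.continuousOn
    have hmem : u ∈ Icc (Ua 0) (Ua y') := ⟨by rw [hUa0]; exact h1, hy'.1.le⟩
    obtain ⟨y, hy1, hy2⟩ := hivt hmem
    exact ⟨y, mem_Iic.2 hy1.2, hy2⟩
  set β := Function.invFunOn Ua (Iic 0) with hβdef
  have hβleft : ∀ x ≤ 0, β (Ua x) = x := by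
    intro x hx
    have h1 : Ua (β (Ua x)) = Ua x := Function.invFunOn_apply_eq (f := Ua) (mem_Iic.2 hx)
    have h2 : β (Ua x) ∈ Iic 0 := Function.invFunOn_apply_mem (f := Ua) (mem_Iic.2 hx)
    exact hUaanti.injOn h2 (mem_Iic.2 hx) h1
  have hβspec : ∀ u, a ≤ u → u < 1 → Ua (β u) = u ∧ β u ≤ 0 := by
    intro u h1 h2
    obtain ⟨y, hy1, hy2⟩ := hexists u h1 h2
    have he : ∃ x ∈ Iic (0:ℝ), Ua x = u := ⟨y, hy1, hy2⟩
    exact ⟨Function.invFunOn_eq he, Function.invFunOn_mem he⟩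
  set α := fun y => β (Ub y) with hαdef
  have hUbr : ∀ y ≤ 0, a < Ub y ∧ Ub y < 1 := by
    intro y hy
    rcases eq_or_lt_of_le hy with h | hy'
    · rw [h, hUb0]; exact ⟨hab, hb⟩
    · exact ⟨lt_trans hab (hrangeb y hy').1, (hrangeb y hy').2⟩
  have hαspec : ∀ y ≤ 0, Ua (α y) = Ub y ∧ α y ≤ 0 :=
    fun y hy => hβspec (Ub y) (le_of_lt (hUbr y hy).1) (hUbr y hy).2
  have hαneg : ∀ y ≤ 0, α y < 0 := by
    intro y hy
    rcases eq_or_lt_of_le (hαspec y hy).2 with h1 | h1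
    · exfalso
      have h2 := (hαspec y hy).1
      rw [h1, hUa0] at h2
      linarith [(hUbr y hy).1]
    · exact h1
  have hβd : ∀ x₀, x₀ < 0 → HasDerivAt β (deriv Ua x₀)⁻¹ (Ua x₀) := by
    intro x₀ hx₀
    have hsd : HasStrictDerivAt Ua (deriv Ua x₀) x₀ := (hC1a.contDiffAt).hasStrictDerivAt one_ne_zero
    have hev : ∀ᶠ x in 𝓝 x₀, β (Ua x) = x := by
      filter_upwards [Iio_mem_nhds hx₀] with x hx
      exact hβleft x hx.le
    exact (hsd.to_local_left_inverse (hWa x₀ hx₀.le).ne hev).hasDerivAt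
  have hαd : ∀ y ≤ 0, HasDerivAt α ((deriv Ua (α y))⁻¹ * deriv Ub y) y := by
    intro y hy
    have h1 := hβd (α y) (hαneg y hy)
    rw [(hαspec y hy).1] at h1
    exact h1.comp y (hUbd y)
  set h := fun y => (deriv Ub y)^2 - (deriv Ua (α y))^2 with hhdef
  have hαcont : ContinuousOn α (Iic 0) :=
    fun y hy => ((hαd y hy).differentiableAt.continuousAt).continuousWithinAt
  have hcont : ContinuousOn h (Iic 0) :=
    ((Wbcont.continuousOn).pow 2).sub ((Wacont.comp_continuousOn hαcont).pow 2)
  have hkey : ∀ y, y < 0 →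
      HasDerivAt h (-(2*vb*(deriv Ub y)^2) + 2*va*(deriv Ua (α y))*(deriv Ub y)) y := by
    intro y hy
    have hyne : y ≠ 0 := ne_of_lt hy
    have hαy := hαneg y hy.le
    have hQne : deriv Ua (α y) ≠ 0 := (hWa (α y) hαy.le).ne
    have hb2 := (hODEgb y hyne).pow 2
    have ha1 := (hODEga (α y) (ne_of_lt hαy)).comp y (hαd y hy.le)
    have ha2 := ha1.pow 2
    have hsum := hb2.sub ha2
    have hc1 : cutoff f b (Ub y) = f (Ub y) := cutoff_of_gt (hrangeb y hy).1
    have hc2 : cutoff f a (Ua (α y)) = f (Ua (α y)) := cutoff_of_gt (hrangea (α y) hαy).1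
    have hc3 : Ua (α y) = Ub y := (hαspec y hy.le).1
    rw [hc1, hc2, hc3] at hsum
    refine hsum.congr_deriv ?_
    have h2 : ((deriv Ua (α y))⁻¹ * deriv Ua (α y)) = 1 := inv_mul_cancel₀ hQne
    norm_num only [Function.comp_apply]
    linear_combination ((2*va*deriv Ua (α y) + 2*f (Ub y))*deriv Ub y) * h2
  have hQ0 : -(deriv Ua (α 0)) < va * b := by
    have h1 := hphia (α 0) (hαneg 0 le_rfl)
    rw [(hαspec 0 le_rfl).1, hUb0] at h1
    exact h1
  have hQ0pos : 0 < -(deriv Ua (α 0)) := by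
    have := hWa (α 0) (hαneg 0 le_rfl).le
    linarith
  have hh0 : 0 < h 0 := by
    have hvab : va * b ≤ vb * b := mul_le_mul_of_nonneg_right hcon (by linarith)
    have he : h 0 = (deriv Ub 0)^2 - (deriv Ua (α 0))^2 := rfl
    rw [he, hWb0]
    nlinarith [hQ0, hQ0pos, hvab]
  clear_value h
  have hhpos : ∀ y ≤ 0, 0 < h y := by
    intro y hy
    by_contra hneg; push_neg at hneg
    have hy0 : y < 0 := by
      rcases eq_or_lt_of_le hy with h1 | h1
      · exfalso; rw [h1] at hneg; linarith
      · exact h1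
    set Z := {t : ℝ | y ≤ t ∧ t ≤ 0 ∧ h t ≤ 0} with hZdef
    have hZc : IsClosed Z := by
      have h1 : Z = Icc y 0 ∩ h ⁻¹' (Iic 0) := by
        ext t; simp [hZdef, and_assoc]
      rw [h1]
      exact (hcont.mono Icc_subset_Iic_self).preimage_isClosed_of_isClosed isClosed_Icc isClosed_Iic
    have hZne : Z.Nonempty := ⟨y, le_rfl, hy0.le, hneg⟩
    have hZbdd : BddAbove Z := ⟨0, fun t ht => ht.2.1⟩
    set z₀ := sSup Z with hz₀def
    have hz₀Z : z₀ ∈ Z := hZc.csSup_mem hZne hZbdd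
    have hz₀0 : z₀ < 0 := by
      rcases eq_or_lt_of_le hz₀Z.2.1 with h1 | h1
      · exfalso; have := hz₀Z.2.2; rw [h1] at this; linarith
      · exact h1
    have hpos : ∀ t, z₀ < t → t ≤ 0 → 0 < h t := by
      intro t h1 h2
      by_contra h3; push_neg at h3
      have hyt : y ≤ t := le_trans hz₀Z.1 h1.le
      exact absurd (le_csSup hZbdd ⟨hyt, h2, h3⟩) (not_le.2 h1)
    have hanti : AntitoneOn h (Icc z₀ 0) := by
      apply antitoneOn_of_deriv_nonpos (convex_Icc _ _) (hcont.mono Icc_subset_Iic_self)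
      · intro t ht; rw [interior_Icc] at ht
        exact (hkey t ht.2).differentiableAt.differentiableWithinAt
      · intro t ht; rw [interior_Icc] at ht
        rw [(hkey t ht.2).deriv]
        have hht := hpos t ht.1 ht.2.le
        have hPpos : 0 < -(deriv Ub t) := by linarith [hWb t ht.2.le]
        have hQpos : 0 < -(deriv Ua (α t)) := by linarith [hWa (α t) (hαneg t ht.2.le).le]
        have hhte : (deriv Ub t)^2 - (deriv Ua (α t))^2 > 0 := by
          simpa [hhdef] using hht
        have hPQ : -(deriv Ua (α t)) < -(deriv Ub t) := by nlinarith
        nlinarith [mul_pos hvapos (mul_pos hPpos (sub_pos.2 hPQ)),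
          mul_nonneg (sub_nonneg.2 hcon) (sq_nonneg (deriv Ub t))]
    have h5 := hanti (left_mem_Icc.2 hz₀0.le) (right_mem_Icc.2 hz₀0.le) hz₀0.le
    have h6 : h 0 ≤ h z₀ := h5
    linarith [hh0, hz₀Z.2.2]
  have hexpd : ∀ t : ℝ, HasDerivAt (fun y : ℝ => Real.exp (va*y)) (Real.exp (va*t) * va) t := by
    intro t
    exact ((Real.hasDerivAt_exp (va*t)).comp t ((hasDerivAt_id t).const_mul va)).congr_deriv (by ring)
  have hg : AntitoneOn (fun y => h y * Real.exp (va * y)) (Iic 0) := by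
    refine antitoneOn_of_deriv_nonpos (convex_Iic 0) ?_ ?_ ?_
    · exact hcont.mul (Continuous.continuousOn (by fun_prop))
    · intro t ht; rw [interior_Iic] at ht
      exact ((hkey t ht).mul (hexpd t)).differentiableAt.differentiableWithinAt
    · intro t ht; rw [interior_Iic] at ht
      have hd := (hkey t ht).mul (hexpd t)
      rw [show deriv (fun y => h y * Real.exp (va * y)) t = _ from hd.deriv]
      have hht := hhpos t ht.le
      have hPpos : 0 < -(deriv Ub t) := by linarith [hWb t ht.le]
      have hQpos : 0 < -(deriv Ua (α t)) := by linarith [hWa (α t) (hαneg t ht.le).le]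
      have hhte : (deriv Ub t)^2 - (deriv Ua (α t))^2 > 0 := by
        simpa [hhdef] using hht
      have hEpos : 0 < Real.exp (va * t) := Real.exp_pos _
      have hbr : (-(2*vb*(deriv Ub t)^2) + 2*va*(deriv Ua (α t))*(deriv Ub t))
          + va * ((deriv Ub t)^2 - (deriv Ua (α t))^2) ≤ 0 := by
        nlinarith [mul_nonneg hvapos.le (sq_nonneg (deriv Ub t - deriv Ua (α t))),
          mul_nonneg (sub_nonneg.2 hcon) (sq_nonneg (deriv Ub t))]
      have he : h t = (deriv Ub t)^2 - (deriv Ua (α t))^2 := by simp [hhdef]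
      rw [he]
      have hfin := mul_nonpos_iff.2 (Or.inr ⟨hbr, hEpos.le⟩)
      nlinarith [hfin]
  -- final contradiction
  set y₁ := -(vb^2/(h 0 * va) + 1) with hy₁def
  have hy₁neg : y₁ < 0 := by
    have h1 : 0 ≤ vb^2/(h 0 * va) := div_nonneg (sq_nonneg vb) (mul_pos hh0 hvapos).le
    rw [hy₁def]; linarith
  have hg1' := hg (mem_Iic.2 hy₁neg.le) (mem_Iic.2 le_rfl) hy₁neg.le
  have hg1 : h 0 * Real.exp (va * 0) ≤ h y₁ * Real.exp (va * y₁) := hg1'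
  rw [mul_zero, Real.exp_zero, mul_one] at hg1
  -- bound on h y₁
  have hhb : h y₁ < vb^2 := by
    have h1 := hphib y₁ hy₁neg
    have h2 : Ub y₁ ≤ 1 := (hrangeb y₁ hy₁neg).2.le
    have hP : 0 < -(deriv Ub y₁) := by linarith [hWb y₁ hy₁neg.le]
    have h3 : -(deriv Ub y₁) < vb := by nlinarith
    have he : h y₁ = (deriv Ub y₁)^2 - (deriv Ua (α y₁))^2 := by simp [hhdef]
    rw [he]
    nlinarith [sq_nonneg (deriv Ua (α y₁))]
  -- exp lower bound
  set X := Real.exp (-(va * y₁)) with hXdef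
  have hXval : -(va * y₁) = vb^2/(h 0) + va := by
    have hne2 : va ≠ 0 := ne_of_gt hvapos
    have key : va * (vb ^ 2 / (h 0 * va)) = vb ^ 2 / h 0 := by
      rw [mul_comm (h 0) va, mul_div_assoc', mul_div_mul_left _ _ hne2]
    calc -(va * y₁) = va * (vb^2/(h 0*va)) + va := by rw [hy₁def]; ring
      _ = vb^2/(h 0) + va := by rw [key]
  have hX1 : vb^2/(h 0) + va < X := by
    rw [hXdef, ← hXval]
    linarith [Real.add_one_le_exp (-(va * y₁))]
  have hEX : Real.exp (va * y₁) * X = 1 := by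
    rw [hXdef, ← Real.exp_add]; ring_nf; exact Real.exp_zero
  have hXpos : 0 < X := Real.exp_pos _
  -- h 0 ≤ h y₁ * exp(va y₁) ⇒ h 0 * X ≤ h y₁
  have h7 : h 0 * X ≤ h y₁ := by
    have := mul_le_mul_of_nonneg_right hg1 hXpos.le
    rwa [mul_assoc, hEX, mul_one] at this
  have h8 : vb^2 + h 0 * va < h 0 * X := by
    have h9 := mul_lt_mul_of_pos_left hX1 hh0
    have h10 : h 0 * (vb^2/(h 0) + va) = vb^2 + h 0 * va := by
      rw [mul_add, mul_div_cancel₀ _ (ne_of_gt hh0), mul_comm]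
    linarith [h9, h10.ge]
  linarith [mul_pos hh0 hvapos]
end

section
/- For each KPP reaction function f, the propagation speed v*(u_c) tends to 0 as u_c → 1⁻. -/
open Real Filter Topology

lemma key_bound (f : ℝ → ℝ) (hf : IsKPP f) (uc v : ℝ) (huc : uc ∈ Set.Ioo (0:ℝ) 1)
    (hv : 0 ≤ v) (U : ℝ → ℝ) (hU : IsPTW f uc v U) : v ^ 2 * uc ^ 2 ≤ 2 * (1 - uc) := by
  obtain ⟨huc0, huc1⟩ := huc
  obtain ⟨hU1, hU2, hode, hU0, hleft, hright, hbot, htop⟩ := hU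
  have hUc : Continuous U := hU1.continuous
  have hUd : Differentiable ℝ U := hU1.differentiable one_ne_zero
  have hU'c : Continuous (deriv U) := hU1.continuous_deriv le_rfl
  rcases eq_or_lt_of_le hv with hv0 | hvpos
  · rw [← hv0]; nlinarith
  -- range of U
  have hrange : ∀ y : ℝ, 0 ≤ U y ∧ U y ≤ 1 := by
    intro y
    rcases lt_trichotomy y 0 with h | h | h
    · exact ⟨le_trans huc0.le (hleft y h).1, (hleft y h).2⟩
    · rw [h, hU0]; exact ⟨huc0.le, huc1.le⟩
    · exact ⟨(hright y h).1, (hright y h).2.trans huc1.le⟩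
  -- cutoff bounds on [0,1]
  have hcut01 : ∀ t : ℝ, 0 ≤ t → t ≤ 1 → 0 ≤ cutoff f uc t ∧ cutoff f uc t ≤ 1 := by
    intro t ht0 ht1
    unfold cutoff
    by_cases h : uc < t
    · rw [if_pos h]
      rcases eq_or_lt_of_le ht1 with h1 | h1
      · rw [h1, hf.2.2.1]; norm_num
      · have := hf.2.2.2.2.2.1 t (lt_trans huc0 h) h1
        exact ⟨this.1.le, this.2.trans ht1⟩
    · rw [if_neg h]; norm_num
  -- second derivative exists away from 0
  have hD2 : ∀ y : ℝ, y ≠ 0 → HasDerivAt (deriv U) (deriv (deriv U) y) y := by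
    intro y hy
    obtain ⟨s, hs, hcd⟩ := (hU2 y hy).contDiffOn le_rfl (by simp)
    have hyt : y ∈ interior s := mem_interior_iff_mem_nhds.mpr hs
    have hcd' : ContDiffOn ℝ 1 (deriv U) (interior s) :=
      (hcd.mono interior_subset).deriv_of_isOpen isOpen_interior (by norm_num)
    exact ((hcd'.differentiableOn one_ne_zero).differentiableAt
      (isOpen_interior.mem_nhds hyt)).hasDerivAt
  -- integrability/measurability of cutoff
  have hcind : cutoff f uc = (Set.Ioi uc).indicator f := by
    funext u; simp [cutoff, Set.indicator_apply, Set.mem_Ioi]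
  have hcm : Measurable (cutoff f uc) := by
    rw [hcind]; exact (hf.1.continuous.measurable).indicator measurableSet_Ioi
  have hint : ∀ a b : ℝ, IntervalIntegrable (cutoff f uc) MeasureTheory.volume a b := by
    intro a b
    rw [hcind, intervalIntegrable_iff]
    exact (intervalIntegrable_iff.mp (hf.1.continuous.intervalIntegrable a b)).indicator
      measurableSet_Ioi
  -- the potential F
  set F : ℝ → ℝ := fun x => ∫ t in uc..x, cutoff f uc t with hF
  have hFuc : F uc = 0 := intervalIntegral.integral_same
  have hFle : ∀ x : ℝ, uc ≤ x → x ≤ 1 → F x ≤ 1 - uc := by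
    intro x h1 h2
    have hm : F x ≤ ∫ _t in uc..x, (1:ℝ) :=
      intervalIntegral.integral_mono_on h1 (hint _ _) intervalIntegrable_const
        (fun t ht => (hcut01 t (le_trans huc0.le ht.1) (ht.2.trans h2)).2)
    have h3 : (∫ _t in uc..x, (1:ℝ)) = x - uc := by simp
    rw [h3] at hm; linarith
  set G : ℝ → ℝ := fun y => F (U y) with hG
  have hGlip : ∀ a b : ℝ, |G a - G b| ≤ |U a - U b| := by
    intro a b
    have h1 : G a - G b = ∫ t in (U b)..(U a), cutoff f uc t :=
      intervalIntegral.integral_interval_sub_left (hint _ _) (hint _ _)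
    rw [h1]
    have h2 : ‖∫ t in (U b)..(U a), cutoff f uc t‖ ≤ 1 * |U a - U b| := by
      apply intervalIntegral.norm_integral_le_of_norm_le_const
      intro t ht
      have htl : U b ⊓ U a < t := ht.1
      have htr : t ≤ U b ⊔ U a := ht.2
      have h0t : 0 ≤ t :=
        le_of_lt (lt_of_le_of_lt (le_inf (hrange b).1 (hrange a).1) htl)
      have ht1 : t ≤ 1 := htr.trans (sup_le (hrange b).2 (hrange a).2)
      have := hcut01 t h0t ht1
      rw [Real.norm_eq_abs, abs_le]
      constructor <;> linarith
    rw [Real.norm_eq_abs, one_mul] at h2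
    exact h2
  have hGcont : Continuous G := by
    rw [continuous_iff_continuousAt]
    intro y
    have h1 : Tendsto (fun z => |U z - U y|) (𝓝 y) (𝓝 0) := by
      have := ((hUc.tendsto y).sub (tendsto_const_nhds (x := U y))).abs
      simpa using this
    have h2 : Tendsto (fun z => G z - G y) (𝓝 y) (𝓝 0) :=
      squeeze_zero_norm (fun z => by simpa [Real.norm_eq_abs] using hGlip z y) h1
    have h3 := h2.add (tendsto_const_nhds (x := G y))
    simpa [ContinuousAt] using h3
  -- the energy
  set E : ℝ → ℝ := fun y => (deriv U y) ^ 2 / 2 + G y with hE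
  have hEcont : Continuous E := ((hU'c.pow 2).div_const 2).add hGcont
  have hEderiv : ∀ y : ℝ, y < 0 → HasDerivAt E (-(v * (deriv U y) ^ 2)) y := by
    intro y hy
    have hyne : y ≠ 0 := ne_of_lt hy
    have hdd := hD2 y hyne
    have hodey := hode y hyne
    have hd1 : HasDerivAt (fun z => (deriv U z) ^ 2 / 2)
        (deriv U y * deriv (deriv U) y) y := by
      have := (hdd.pow 2).div_const 2
      refine this.congr_deriv (Eq.symm ?_)
      ring
    rcases lt_or_eq_of_le (hleft y hy).1 with hgt | heq
    · -- U y > uc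
      have hev : cutoff f uc =ᶠ[𝓝 (U y)] f := by
        filter_upwards [Ioi_mem_nhds hgt] with t ht
        simp only [cutoff]
        rw [if_pos (Set.mem_Ioi.mp ht)]
      have hcont_cut : ContinuousAt (cutoff f uc) (U y) :=
        (hf.1.continuous.continuousAt).congr hev.symm
      have hFd : HasDerivAt F (cutoff f uc (U y)) (U y) :=
        intervalIntegral.integral_hasDerivAt_right (hint _ _)
          (hcm.stronglyMeasurable.stronglyMeasurableAtFilter) hcont_cut
      have hGd : HasDerivAt G (cutoff f uc (U y) * deriv U y) y :=
        hFd.comp y (hUd y).hasDerivAt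
      have hsum := hd1.add hGd
      refine hsum.congr_deriv (Eq.symm ?_)
      linear_combination (-(deriv U y)) * hodey
    · -- U y = uc
      have hmin : IsLocalMin U y := by
        have : ∀ᶠ z in 𝓝 y, U y ≤ U z := by
          filter_upwards [Iio_mem_nhds hy] with z hz
          rw [← heq]; exact (hleft z hz).1
        exact this
      have h0 : deriv U y = 0 := hmin.deriv_eq_zero
      have hU'0 : HasDerivAt U 0 y := by
        have := (hUd y).hasDerivAt; rwa [h0] at this
      have hGd : HasDerivAt G 0 y := by
        rw [hasDerivAt_iff_isLittleO]
        simp only [smul_zero, sub_zero]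
        have hO : (fun z => G z - G y) =O[𝓝 y] (fun z => U z - U y) :=
          Asymptotics.isBigO_of_le _ (fun z => by
            simpa [Real.norm_eq_abs] using hGlip z y)
        have hoo : (fun z => U z - U y) =o[𝓝 y] (fun z => z - y) := by
          have := hasDerivAt_iff_isLittleO.mp hU'0
          simpa using this
        exact hO.trans_isLittleO hoo
      have hsum := hd1.add hGd
      refine hsum.congr_deriv (Eq.symm ?_)
      rw [h0]; ring
  have hEanti : AntitoneOn E (Set.Iic 0) := by
    apply antitoneOn_of_deriv_nonpos (convex_Iic 0) hEcont.continuousOn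
    · intro y hy
      rw [interior_Iic] at hy
      exact (hEderiv y hy).differentiableAt.differentiableWithinAt
    · intro y hy
      rw [interior_Iic] at hy
      rw [(hEderiv y hy).deriv]
      nlinarith [sq_nonneg (deriv U y)]
  -- right side: U'(0) = -v*uc
  have hgconst : ∀ y : ℝ, 0 ≤ y → Real.exp (v * y) * deriv U y = deriv U 0 := by
    have hgc : Continuous fun y => Real.exp (v * y) * deriv U y :=
      (Real.continuous_exp.comp (continuous_const.mul continuous_id)).mul hU'c
    have hgd : ∀ y ∈ interior (Set.Ici (0:ℝ)),
        HasDerivAt (fun y => Real.exp (v * y) * deriv U y) 0 y := by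
      intro y hy
      rw [interior_Ici] at hy
      have hyne : y ≠ 0 := ne_of_gt hy
      have h1 : HasDerivAt (fun z : ℝ => v * z) v y := by
        simpa using (hasDerivAt_id y).const_mul v
      have h2 := h1.exp.mul (hD2 y hyne)
      refine h2.congr_deriv (Eq.symm ?_)
      have hcz : cutoff f uc (U y) = 0 := by
        simp [cutoff, not_lt.mpr (hright y hy).2]
      have hodey := hode y hyne
      rw [hcz] at hodey
      linear_combination (-(Real.exp (v * y))) * hodey
    have hdiff : DifferentiableOn ℝ (fun y => Real.exp (v * y) * deriv U y)
        (interior (Set.Ici (0:ℝ))) :=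
      fun y hy => ((hgd y hy).differentiableAt).differentiableWithinAt
    have hmono := monotoneOn_of_deriv_nonneg (convex_Ici 0) hgc.continuousOn hdiff
      (fun y hy => by rw [(hgd y hy).deriv])
    have hanti := antitoneOn_of_deriv_nonpos (convex_Ici 0) hgc.continuousOn hdiff
      (fun y hy => by rw [(hgd y hy).deriv])
    intro y hy
    have h1 := hmono Set.self_mem_Ici (Set.mem_Ici.mpr hy) hy
    have h2 := hanti Set.self_mem_Ici (Set.mem_Ici.mpr hy) hy
    have h3 : Real.exp (v * y) * deriv U y = Real.exp (v * 0) * deriv U 0 :=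
      le_antisymm h2 h1
    simpa using h3
  have hUy' : ∀ y : ℝ, 0 ≤ y → deriv U y = deriv U 0 * Real.exp (-(v * y)) := by
    intro y hy
    have h1 := hgconst y hy
    have hne : Real.exp (v * y) ≠ 0 := (Real.exp_pos _).ne'
    rw [Real.exp_neg]
    field_simp
    linear_combination h1
  have hvne : v ≠ 0 := ne_of_gt hvpos
  set c : ℝ := deriv U 0 with hcdef
  have hhd : ∀ y ∈ interior (Set.Ici (0:ℝ)),
      HasDerivAt (fun z => U z + c / v * Real.exp (-(v * z))) 0 y := by
    intro y hy
    rw [interior_Ici] at hy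
    have h1 : HasDerivAt (fun z : ℝ => -(v * z)) (-v) y := by
      exact (((hasDerivAt_id y).const_mul v).neg).congr_deriv (by ring)
    have h2 := (h1.exp).const_mul (c / v)
    have h3 := (hUd y).hasDerivAt.add h2
    refine h3.congr_deriv (Eq.symm ?_)
    rw [hUy' y hy.le]
    field_simp
    ring
  have hhc : Continuous fun z => U z + c / v * Real.exp (-(v * z)) :=
    hUc.add (continuous_const.mul
      (Real.continuous_exp.comp (continuous_const.mul continuous_id).neg))
  have hhdiff : DifferentiableOn ℝ (fun z => U z + c / v * Real.exp (-(v * z)))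
      (interior (Set.Ici (0:ℝ))) :=
    fun y hy => ((hhd y hy).differentiableAt).differentiableWithinAt
  have hhmono := monotoneOn_of_deriv_nonneg (convex_Ici 0) hhc.continuousOn hhdiff
    (fun y hy => by rw [(hhd y hy).deriv])
  have hhanti := antitoneOn_of_deriv_nonpos (convex_Ici 0) hhc.continuousOn hhdiff
    (fun y hy => by rw [(hhd y hy).deriv])
  have hhconst : ∀ y : ℝ, 0 ≤ y →
      U y + c / v * Real.exp (-(v * y)) = U 0 + c / v * Real.exp (-(v * 0)) := by
    intro y hy
    exact le_antisymm (hhanti Set.self_mem_Ici (Set.mem_Ici.mpr hy) hy)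
      (hhmono Set.self_mem_Ici (Set.mem_Ici.mpr hy) hy)
  have hlim : Tendsto (fun z => U z + c / v * Real.exp (-(v * z))) atTop (𝓝 0) := by
    have h2 : Tendsto (fun z : ℝ => Real.exp (-(v * z))) atTop (𝓝 0) := by
      apply Real.tendsto_exp_atBot.comp
      rw [tendsto_neg_atBot_iff]
      exact Tendsto.const_mul_atTop hvpos tendsto_id
    have h3 := htop.add ((tendsto_const_nhds (x := c / v)).mul h2)
    simpa using h3
  have hlim2 : Tendsto (fun z => U z + c / v * Real.exp (-(v * z))) atTop
      (𝓝 (U 0 + c / v * Real.exp (-(v * 0)))) := by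
    apply Tendsto.congr' _ (tendsto_const_nhds)
    filter_upwards [eventually_ge_atTop (0:ℝ)] with z hz
    exact (hhconst z hz).symm
  have hc0 : U 0 + c / v * Real.exp (-(v * 0)) = 0 := tendsto_nhds_unique hlim2 hlim
  rw [hU0] at hc0
  simp only [mul_zero, neg_zero, Real.exp_zero, mul_one] at hc0
  have hcval : c = -(v * uc) := by
    field_simp at hc0
    linarith
  -- E at 0
  have hE0 : E 0 = v ^ 2 * uc ^ 2 / 2 := by
    have hG0 : G 0 = 0 := by
      show F (U 0) = 0
      rw [hU0]; exact hFuc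
    show (deriv U 0) ^ 2 / 2 + G 0 = v ^ 2 * uc ^ 2 / 2
    rw [hG0, ← hcdef, hcval]
    ring
  -- MVT sequence
  have hkey : ∀ n : ℕ, v ^ 2 * uc ^ 2 / 2 ≤
      (U (-(n : ℝ)) - U (-(n : ℝ) - 1)) ^ 2 / 2 + (1 - uc) := by
    intro n
    obtain ⟨ξ, hξmem, hξ⟩ := exists_hasDerivAt_eq_slope U (deriv U)
      (by linarith : -(n : ℝ) - 1 < -(n : ℝ)) hUc.continuousOn
      (fun x _ => (hUd x).hasDerivAt)
    have hn0 : (0:ℝ) ≤ (n:ℝ) := Nat.cast_nonneg n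
    have hξ0 : ξ < 0 := lt_of_lt_of_le hξmem.2 (by linarith)
    have hden : (-(n:ℝ)) - (-(n:ℝ) - 1) = 1 := by ring
    have hξval : deriv U ξ = U (-(n : ℝ)) - U (-(n : ℝ) - 1) := by
      rw [hξ, hden, div_one]
    have h1 : E 0 ≤ E ξ :=
      hEanti (Set.mem_Iic.mpr hξ0.le) (Set.mem_Iic.mpr le_rfl) hξ0.le
    have h2 : E ξ ≤ (deriv U ξ) ^ 2 / 2 + (1 - uc) := by
      have h3 := hFle (U ξ) (hleft ξ hξ0).1 (hleft ξ hξ0).2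
      show (deriv U ξ) ^ 2 / 2 + G ξ ≤ _
      have : G ξ ≤ 1 - uc := h3
      linarith
    calc v ^ 2 * uc ^ 2 / 2 = E 0 := hE0.symm
      _ ≤ E ξ := h1
      _ ≤ (deriv U ξ) ^ 2 / 2 + (1 - uc) := h2
      _ = _ := by rw [hξval]
  have hd0 : Tendsto (fun n : ℕ => (U (-(n : ℝ)) - U (-(n : ℝ) - 1)) ^ 2 / 2 + (1 - uc))
      atTop (𝓝 (1 - uc)) := by
    have h1 : Tendsto (fun n : ℕ => -(n : ℝ)) atTop atBot := by
      rw [tendsto_neg_atBot_iff]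
      exact tendsto_natCast_atTop_atTop
    have h2 : Tendsto (fun n : ℕ => -(n : ℝ) - 1) atTop atBot :=
      tendsto_atBot_add_const_right _ (-1) h1
    have h3 := (hbot.comp h1).sub (hbot.comp h2)
    have h4 : Tendsto (fun n : ℕ => U (-(n : ℝ)) - U (-(n : ℝ) - 1)) atTop (𝓝 0) := by
      have : (1:ℝ) - 1 = 0 := by norm_num
      rw [← this]
      exact h3
    have h5 := ((h4.pow 2).div_const 2).add_const (1 - uc)
    simpa using h5
  have hfin : v ^ 2 * uc ^ 2 / 2 ≤ 1 - uc := ge_of_tendsto' hd0 hkey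
  linarith

/-- The propagation speed tends to `0` as the cut-off tends to `1⁻`. -/
theorem vstar_tendsto_zero (f : ℝ → ℝ) (hf : IsKPP f) (vstar : ℝ → ℝ)
    (hvstar : ∀ uc ∈ Set.Ioo (0:ℝ) 1, 0 ≤ vstar uc ∧ ∃ U : ℝ → ℝ, IsPTW f uc (vstar uc) U) :
    Tendsto vstar (𝓝[<] (1:ℝ)) (𝓝 0) := by
  have hb : ∀ uc ∈ Set.Ioo (0:ℝ) 1, vstar uc ≤ Real.sqrt (2 * (1 - uc)) / uc := by
    intro uc huc
    obtain ⟨hv, U, hU⟩ := hvstar uc huc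
    have hkey := key_bound f hf uc (vstar uc) huc hv U hU
    have huc0 := huc.1
    rw [le_div_iff₀ huc0]
    have h1 : (vstar uc * uc) ^ 2 ≤ 2 * (1 - uc) := by
      rw [mul_pow]; exact hkey
    have h2 : 0 ≤ vstar uc * uc := mul_nonneg hv huc0.le
    calc vstar uc * uc = Real.sqrt ((vstar uc * uc) ^ 2) := (Real.sqrt_sq h2).symm
      _ ≤ Real.sqrt (2 * (1 - uc)) := Real.sqrt_le_sqrt h1
  have hev : ∀ᶠ uc in 𝓝[<] (1:ℝ), uc ∈ Set.Ioo (0:ℝ) 1 := by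
    have h1 : Set.Ioo (0:ℝ) 1 ∈ 𝓝[<] (1:ℝ) :=
      Ioo_mem_nhdsLT (by norm_num)
    filter_upwards [h1] with u hu
    exact hu
  have hup : Tendsto (fun uc => Real.sqrt (2 * (1 - uc)) / uc) (𝓝[<] (1:ℝ)) (𝓝 0) := by
    have hca : ContinuousAt (fun uc : ℝ => Real.sqrt (2 * (1 - uc)) / uc) 1 := by
      apply ContinuousAt.div
      · exact (Real.continuous_sqrt.continuousAt).comp
          ((continuous_const.mul (continuous_const.sub continuous_id)).continuousAt)
      · exact continuousAt_id
      · norm_num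
    have h2 : Tendsto (fun uc : ℝ => Real.sqrt (2 * (1 - uc)) / uc) (𝓝[<] (1:ℝ))
        (𝓝 (Real.sqrt (2 * (1 - 1)) / 1)) := hca.tendsto.mono_left nhdsWithin_le_nhds
    simpa using h2
  apply tendsto_of_tendsto_of_tendsto_of_le_of_le' tendsto_const_nhds hup
  · filter_upwards [hev] with u hu
    exact (hvstar u hu).1
  · filter_upwards [hev] with u hu
    exact hb u hu
end
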